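/- arXiv:1605.01240 — 4 statements merged into one kernel-verified Lean document; each statement's English description precedes it below -/
import Mathlib

section
/- (Corollary 11, Dey–Edelsbrunner bound) Let Σ be a finite connected 2-dimensional simplicial complex with β_2(Σ) ≥ 1 such that the space Z_2(Σ) of Z_2 2-cycles admits a 2-complete basis (by Theorem 2 of the paper, this holds whenever Σ is PL embeddable into ℝ^{3}). Then f_2(Σ) ≤ n·(n − 3), where n is the number of vertices of Σ. -/
open Finset

/-- A finite simplicial complex on a finite vertex type `V`:
a finite nonempty collection of nonempty finite sets (faces)
closed under taking nonempty subsets. -/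
structure SComplex (V : Type) [DecidableEq V] [Fintype V] where
  faces : Finset (Finset V)
  nonempty : faces.Nonempty
  no_empty : ∀ σ ∈ faces, σ ≠ ∅
  down_closed : ∀ σ ∈ faces, ∀ τ, τ ⊆ σ → τ ≠ ∅ → τ ∈ faces

namespace SComplex

variable {V : Type} [DecidableEq V] [Fintype V]

/-- The set of faces of dimension `i` (i.e. of cardinality `i+1`). -/
def facesDim (K : SComplex V) (i : ℕ) : Finset (Finset V) :=
  K.faces.filter (fun σ => σ.card = i + 1)

/-- `fnum K i` is the face number `f_i`. -/
def fnum (K : SComplex V) (i : ℕ) : ℕ := (K.facesDim i).card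

/-- The space of `Z_2` `i`-chains: functions from the `i`-faces to `Z_2`. -/
abbrev Chains (K : SComplex V) (i : ℕ) : Type := {σ // σ ∈ K.facesDim i} → ZMod 2

/-- The boundary map `∂_i : C_i → C_{i-1}` (and `∂_0 = 0`): the value of `∂ c` on an
`(i-1)`-face `τ` is the sum over `i`-faces `σ ⊇ τ` of `c σ`. -/
def boundary (K : SComplex V) (i : ℕ) : Chains K i →ₗ[ZMod 2] Chains K (i - 1) :=
  if i = 0 then 0 else
  { toFun := fun c τ =>
      ∑ σ : {σ // σ ∈ K.facesDim i}, if (τ : Finset V) ⊆ (σ : Finset V) then c σ else 0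
    map_add' := by
      intro c d
      funext τ
      show (∑ σ : {σ // σ ∈ K.facesDim i}, _) = _
      rw [Pi.add_apply, ← Finset.sum_add_distrib]
      apply Finset.sum_congr rfl
      intro σ _
      by_cases h : (τ : Finset V) ⊆ (σ : Finset V) <;> simp [h]
    map_smul' := by
      intro a c
      funext τ
      show (∑ σ : {σ // σ ∈ K.facesDim i}, _) = _
      rw [RingHom.id_apply, Pi.smul_apply, smul_eq_mul, Finset.mul_sum]
      apply Finset.sum_congr rfl
      intro σ _
      by_cases h : (τ : Finset V) ⊆ (σ : Finset V) <;> simp [h] }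

/-- The `i`-th `Z_2` Betti number: `dim ker ∂_i − rank ∂_{i+1}`. -/
noncomputable def betti (K : SComplex V) (i : ℕ) : ℕ :=
  Module.finrank (ZMod 2) (LinearMap.ker (K.boundary i)) -
    Module.finrank (ZMod 2) (LinearMap.range (K.boundary (i + 1)))

/-- The number of `i`-faces in the support of a chain. -/
def suppCard {K : SComplex V} {i : ℕ} (c : Chains K i) : ℕ :=
  (Finset.univ.filter (fun σ => c σ ≠ 0)).card

/-- The girth: the minimal support size of a nonzero `d`-cycle. -/
noncomputable def girth (K : SComplex V) (d : ℕ) : ℕ :=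
  sInf {n | ∃ c : Chains K d, c ∈ LinearMap.ker (K.boundary d) ∧ c ≠ 0 ∧ suppCard c = n}

/-- `Z_d(K)` admits an `m`-complete basis: a basis of the space of `d`-cycles such that every
`d`-face lies in the support of at most `m` basis elements. -/
def HasCompleteBasis (K : SComplex V) (d m : ℕ) : Prop :=
  ∃ (ι : Type) (_ : Fintype ι) (b : Module.Basis ι (ZMod 2) (LinearMap.ker (K.boundary d))),
    ∀ σ : {σ // σ ∈ K.facesDim d},
      (Finset.univ.filter (fun i : ι => (b i).1 σ ≠ 0)).card ≤ m

/-- `K` is `d`-dimensional: `d` is the maximal dimension of a face. -/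
def IsDim (K : SComplex V) (d : ℕ) : Prop :=
  (∀ σ ∈ K.faces, σ.card ≤ d + 1) ∧ ∃ σ ∈ K.faces, σ.card = d + 1

/-- `K` is pure `d`-dimensional: every face is contained in a `d`-face. -/
def IsPure (K : SComplex V) (d : ℕ) : Prop :=
  ∀ σ ∈ K.faces, ∃ τ ∈ K.faces, σ ⊆ τ ∧ τ.card = d + 1

/-- A `d`-dimensional complex is balanced if its vertices can be colored with `d+1` colors
so that the coloring is injective on every face. -/
def IsBalanced (K : SComplex V) (d : ℕ) : Prop :=
  ∃ coloring : V → Fin (d + 1), ∀ σ ∈ K.faces, Set.InjOn coloring (σ : Set V)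

/-- The `d`-skeleton of `K`: all faces of dimension at most `d`. -/
def skeleton (K : SComplex V) (d : ℕ) : SComplex V where
  faces := K.faces.filter (fun σ => σ.card ≤ d + 1)
  nonempty := by
    obtain ⟨σ, hσ⟩ := K.nonempty
    obtain ⟨v, hv⟩ := Finset.nonempty_iff_ne_empty.mpr (K.no_empty σ hσ)
    refine ⟨{v}, Finset.mem_filter.mpr ⟨K.down_closed σ hσ {v}
      (Finset.singleton_subset_iff.mpr hv) (Finset.singleton_ne_empty v), by simp⟩⟩
  no_empty := by
    intro σ hσ
    exact K.no_empty σ (Finset.mem_filter.mp hσ).1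
  down_closed := by
    intro σ hσ τ hτσ hτ
    rw [Finset.mem_filter] at hσ ⊢
    exact ⟨K.down_closed σ hσ.1 τ hτσ hτ, le_trans (Finset.card_le_card hτσ) hσ.2⟩

end SComplex

namespace DE

open SComplex

variable {V : Type} [DecidableEq V] [Fintype V]

lemma boundary_apply (K : SComplex V) {i : ℕ} (hi : i ≠ 0) (c : Chains K i)
    (τ : {σ // σ ∈ K.facesDim (i - 1)}) :
    K.boundary i c τ =
      ∑ σ : {σ // σ ∈ K.facesDim i}, if (τ : Finset V) ⊆ (σ : Finset V) then c σ else 0 := by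
  rw [SComplex.boundary, if_neg hi]
  rfl

lemma finrank_chains (K : SComplex V) (i : ℕ) :
    Module.finrank (ZMod 2) (Chains K i) = K.fnum i := by
  rw [Module.finrank_pi]
  exact Fintype.card_coe _

/-- even count of edges between a vertex and a triangle -/
lemma card_between (K : SComplex V) (τ σ : Finset V) (hτ : τ ∈ K.facesDim 0)
    (hσ : σ ∈ K.facesDim 2) :
    Even ((Finset.univ.filter (fun e : {e // e ∈ K.facesDim 1} =>
      τ ⊆ (e : Finset V) ∧ (e : Finset V) ⊆ σ)).card) := by
  classical
  have hc : (Finset.univ.filter (fun e : {e // e ∈ K.facesDim 1} =>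
      τ ⊆ (e : Finset V) ∧ (e : Finset V) ⊆ σ)).card
      = ((K.facesDim 1).filter (fun e => τ ⊆ e ∧ e ⊆ σ)).card := by
    refine Finset.card_bij (fun e _ => (e : Finset V)) ?_ ?_ ?_
    · intro a ha
      rw [Finset.mem_filter] at ha ⊢
      exact ⟨a.2, ha.2⟩
    · intro a _ b _ h
      exact Subtype.ext h
    · intro b hb
      rw [Finset.mem_filter] at hb
      exact ⟨⟨b, hb.1⟩, Finset.mem_filter.mpr ⟨Finset.mem_univ _, hb.2⟩, rfl⟩
  rw [hc]
  obtain ⟨hτf, hτc⟩ := Finset.mem_filter.mp hτ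
  obtain ⟨hσf, hσc⟩ := Finset.mem_filter.mp hσ
  obtain ⟨v, rfl⟩ := Finset.card_eq_one.mp hτc
  by_cases hτσ : ({v} : Finset V) ⊆ σ
  · have hvσ : v ∈ σ := hτσ (Finset.mem_singleton_self v)
    have himg : (K.facesDim 1).filter (fun e => {v} ⊆ e ∧ e ⊆ σ)
        = (σ.erase v).image (fun x => insert x {v}) := by
      ext e
      rw [Finset.mem_filter, Finset.mem_image]
      constructor
      · rintro ⟨he1, hve, heσ⟩
        obtain ⟨hef, hec⟩ := Finset.mem_filter.mp he1
        have hv : v ∈ e := hve (Finset.mem_singleton_self v)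
        have hcerase : (e.erase v).card = 1 := by
          rw [Finset.card_erase_of_mem hv, hec]
        obtain ⟨x, hx⟩ := Finset.card_eq_one.mp hcerase
        have hxv : x ≠ v := by
          have : x ∈ e.erase v := by rw [hx]; exact Finset.mem_singleton_self x
          exact (Finset.mem_erase.mp this).1
        have hxe : x ∈ e := by
          have : x ∈ e.erase v := by rw [hx]; exact Finset.mem_singleton_self x
          exact (Finset.mem_erase.mp this).2
        refine ⟨x, Finset.mem_erase.mpr ⟨hxv, heσ hxe⟩, ?_⟩
        have h1 : insert v (e.erase v) = e := Finset.insert_erase hv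
        rw [hx] at h1
        rw [← h1]
        exact Finset.pair_comm x v
      · rintro ⟨x, hx, rfl⟩
        obtain ⟨hxv, hxσ⟩ := Finset.mem_erase.mp hx
        have hsub : insert x {v} ⊆ σ := by
          intro y hy
          rcases Finset.mem_insert.mp hy with rfl | hy'
          · exact hxσ
          · rw [Finset.mem_singleton.mp hy']; exact hvσ
        have hcard : (insert x ({v} : Finset V)).card = 2 := by
          rw [Finset.card_insert_of_notMem (by simp [hxv]), Finset.card_singleton]
        refine ⟨Finset.mem_filter.mpr ⟨K.down_closed σ hσf _ hsub (by
          intro h; apply hxv; have : x ∈ (∅ : Finset V) := h ▸ Finset.mem_insert_self x {v}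
          simp at this), hcard⟩, ?_, hsub⟩
        intro y hy
        rw [Finset.mem_singleton.mp hy]
        exact Finset.mem_insert_of_mem (Finset.mem_singleton_self v)
    rw [himg, Finset.card_image_of_injOn, Finset.card_erase_of_mem hvσ, hσc]
    · decide
    · intro x hx y hy hxy
      have hxv : x ≠ v := (Finset.mem_erase.mp (Finset.mem_coe.mp hx)).1
      have hxy' : (insert x ({v} : Finset V)) = insert y {v} := hxy
      have : x ∈ insert y ({v} : Finset V) := by
        rw [← hxy']; exact Finset.mem_insert_self x {v}
      rcases Finset.mem_insert.mp this with h | h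
      · exact h
      · exact absurd (Finset.mem_singleton.mp h) hxv
  · have : (K.facesDim 1).filter (fun e => {v} ⊆ e ∧ e ⊆ σ) = ∅ := by
      apply Finset.filter_false_of_mem
      intro e _ ⟨h1, h2⟩
      exact absurd (h1.trans h2) hτσ
    rw [this]
    simp

lemma boundary_boundary (K : SComplex V) (c : Chains K 2) :
    K.boundary 1 (K.boundary 2 c) = 0 := by
  classical
  funext τ
  show (K.boundary 1 (K.boundary 2 c)) τ = 0
  rw [boundary_apply K one_ne_zero]
  have h3 : ∀ e : {σ // σ ∈ K.facesDim 1},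
      (if (τ : Finset V) ⊆ (e : Finset V) then (K.boundary 2 c) e else 0)
      = ∑ σ : {σ // σ ∈ K.facesDim 2},
          if ((τ : Finset V) ⊆ (e : Finset V) ∧ (e : Finset V) ⊆ (σ : Finset V))
          then c σ else 0 := by
    intro e
    by_cases h : (τ : Finset V) ⊆ (e : Finset V)
    · rw [if_pos h, boundary_apply K two_ne_zero]
      exact Finset.sum_congr rfl (fun σ _ => by rw [if_congr (and_iff_right h) rfl rfl])
    · rw [if_neg h]
      exact (Finset.sum_eq_zero (fun σ _ => if_neg (fun hc => h hc.1))).symm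
  rw [Finset.sum_congr rfl (fun e _ => h3 e), Finset.sum_comm]
  apply Finset.sum_eq_zero
  intro σ _
  rw [← Finset.sum_filter, Finset.sum_const]
  obtain ⟨k, hk⟩ := card_between K (τ : Finset V) (σ : Finset V) τ.2 σ.2
  rw [hk, ← two_mul]
  have hmul : ((2 * k) • c σ : ZMod 2) = ((2 * k : ℕ) : ZMod 2) * c σ := nsmul_eq_mul _ _
  rw [hmul]
  have h2 : ((2 * k : ℕ) : ZMod 2) = 0 := by
    rw [ZMod.natCast_eq_zero_iff]
    exact ⟨k, rfl⟩
  rw [h2, zero_mul]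

/-- girth: every nonzero 2-cycle has at least 4 faces in its support -/
lemma girth_four (K : SComplex V) (z : Chains K 2) (hz : K.boundary 2 z = 0) (hne : z ≠ 0) :
    4 ≤ suppCard z := by
  obtain ⟨σ0, hσ0⟩ : ∃ σ0, z σ0 ≠ 0 := by
    obtain ⟨a, ha⟩ := Function.ne_iff.mp hne
    exact ⟨a, ha⟩
  have hσ0c : (σ0 : Finset V).card = 3 := (Finset.mem_filter.mp σ0.2).2
  have hσ0f : (σ0 : Finset V) ∈ K.faces := (Finset.mem_filter.mp σ0.2).1
  have hD1 : ∀ e ∈ (σ0 : Finset V).powersetCard 2, e ∈ K.facesDim 1 := by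
    intro e he
    obtain ⟨hsub, hcard⟩ := Finset.mem_powersetCard.mp he
    refine Finset.mem_filter.mpr ⟨K.down_closed _ hσ0f e hsub ?_, hcard⟩
    intro h
    rw [h] at hcard
    simp at hcard
  have key : ∀ e : Finset V, ∃ τ : {σ // σ ∈ K.facesDim 2},
      e ∈ (σ0 : Finset V).powersetCard 2 → (τ ≠ σ0 ∧ e ⊆ (τ : Finset V) ∧ z τ ≠ 0) := by
    intro e
    by_cases he : e ∈ (σ0 : Finset V).powersetCard 2
    · obtain ⟨hsub, hcard⟩ := Finset.mem_powersetCard.mp he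
      by_contra hcon
      push_neg at hcon
      have hsum : ∑ σ : {σ // σ ∈ K.facesDim 2},
          (if e ⊆ (σ : Finset V) then z σ else 0) = 0 := by
        have := congrFun hz ⟨e, hD1 e he⟩
        rw [boundary_apply K two_ne_zero z ⟨e, hD1 e he⟩] at this
        exact this
      have hsingle : ∑ σ : {σ // σ ∈ K.facesDim 2},
          (if e ⊆ (σ : Finset V) then z σ else 0)
          = (if e ⊆ (σ0 : Finset V) then z σ0 else 0) := by
        refine Finset.sum_eq_single σ0 ?_ ?_
        · intro τ _ hτ
          by_cases hsub' : e ⊆ (τ : Finset V)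
          · rw [if_pos hsub']
            have h1 := hcon τ
            tauto
          · exact if_neg hsub'
        · intro h
          exact absurd (Finset.mem_univ σ0) h
      rw [hsingle, if_pos hsub] at hsum
      exact hσ0 hsum
    · exact ⟨σ0, fun h => absurd h he⟩
  choose f hf using key
  have hinj : Set.InjOn f ((σ0 : Finset V).powersetCard 2 : Set (Finset V)) := by
    intro e1 he1 e2 he2 hfe
    rw [Finset.mem_coe] at he1 he2
    by_contra hne12
    obtain ⟨hne1, hsub1, -⟩ := hf e1 he1
    obtain ⟨-, hsub2, -⟩ := hf e2 he2
    obtain ⟨hsubσ1, hc1⟩ := Finset.mem_powersetCard.mp he1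
    obtain ⟨hsubσ2, hc2⟩ := Finset.mem_powersetCard.mp he2
    have hu3 : 3 ≤ (e1 ∪ e2).card := by
      by_contra hlt
      push_neg at hlt
      have h1 : e1 = e1 ∪ e2 := Finset.eq_of_subset_of_card_le Finset.subset_union_left
        (by omega)
      have h2 : e2 = e1 ∪ e2 := Finset.eq_of_subset_of_card_le Finset.subset_union_right
        (by omega)
      exact hne12 (h1.trans h2.symm)
    have huσ : e1 ∪ e2 = (σ0 : Finset V) :=
      Finset.eq_of_subset_of_card_le (Finset.union_subset hsubσ1 hsubσ2) (by omega)
    have hτc : ((f e1 : {σ // σ ∈ K.facesDim 2}) : Finset V).card = 3 :=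
      (Finset.mem_filter.mp (f e1).2).2
    have hsubτ : (σ0 : Finset V) ⊆ (f e1 : Finset V) := by
      rw [← huσ]
      rw [hfe] at hsub1 ⊢
      exact Finset.union_subset hsub1 hsub2
    exact hne1 (Subtype.ext (Finset.eq_of_subset_of_card_le hsubτ (by omega)).symm)
  have hmaps : ∀ e ∈ (σ0 : Finset V).powersetCard 2,
      f e ∈ (Finset.univ.filter (fun σ => z σ ≠ 0)).erase σ0 := by
    intro e he
    obtain ⟨h1, -, h3⟩ := hf e he
    exact Finset.mem_erase.mpr ⟨h1, Finset.mem_filter.mpr ⟨Finset.mem_univ _, h3⟩⟩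
  have hcard3 : ((σ0 : Finset V).powersetCard 2).card = 3 := by
    rw [Finset.card_powersetCard, hσ0c]
    decide
  have hle := Finset.card_le_card_of_injOn f hmaps hinj
  rw [hcard3] at hle
  have hmem : σ0 ∈ Finset.univ.filter (fun σ => z σ ≠ 0) :=
    Finset.mem_filter.mpr ⟨Finset.mem_univ _, hσ0⟩
  have herase := Finset.card_erase_of_mem hmem
  have hpos : 1 ≤ (Finset.univ.filter (fun σ => z σ ≠ 0)).card :=
    Finset.card_pos.mpr ⟨σ0, hmem⟩
  show 4 ≤ (Finset.univ.filter (fun σ : {σ // σ ∈ K.facesDim 2} => z σ ≠ 0)).card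
  omega

end DE

open SComplex
/-- Corollary 11, Dey–Edelsbrunner bound. -/
theorem dey_edelsbrunner {V : Type} [DecidableEq V] [Fintype V]
    (K : SComplex V) (hdim : K.IsDim 2) (hconn : K.betti 0 = 1)
    (hβ : 1 ≤ K.betti 2) (hcb : K.HasCompleteBasis 2 2) :
    (K.fnum 2 : ℤ) ≤ (K.fnum 0 : ℤ) * ((K.fnum 0 : ℤ) - 3) := by
  obtain ⟨ι, hι, b, hb2⟩ := hcb
  -- no 3-dimensional faces
  have hD3 : K.facesDim 3 = ∅ := by
    ext σ
    simp only [SComplex.facesDim, Finset.mem_filter, Finset.notMem_empty, iff_false, not_and]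
    intro hσ
    have := hdim.1 σ hσ
    omega
  have hr3 : Module.finrank (ZMod 2) (LinearMap.range (K.boundary 3)) = 0 := by
    have h1 : Module.finrank (ZMod 2) (SComplex.Chains K 3) = 0 := by
      rw [DE.finrank_chains]
      show (K.facesDim 3).card = 0
      rw [hD3]
      rfl
    have h2 := LinearMap.finrank_range_le (K.boundary 3)
    omega
  have hbetti2 : K.betti 2 = Module.finrank (ZMod 2) (LinearMap.ker (K.boundary 2)) := by
    rw [SComplex.betti]
    norm_num [hr3]
  rw [hbetti2] at hβ
  -- betti 0 facts
  have hb0 : K.boundary 0 = 0 := by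
    rw [SComplex.boundary, if_pos rfl]
  have hker0 : Module.finrank (ZMod 2) (LinearMap.ker (K.boundary 0)) = K.fnum 0 := by
    rw [hb0, LinearMap.ker_zero, finrank_top, DE.finrank_chains]
  have hconn' : K.fnum 0
      - Module.finrank (ZMod 2) (LinearMap.range (K.boundary 1)) = 1 := by
    rw [SComplex.betti, hker0] at hconn
    exact hconn
  have hr1le : Module.finrank (ZMod 2) (LinearMap.range (K.boundary 1)) ≤ K.fnum 0 := by
    have h1 := Submodule.finrank_le (LinearMap.range (K.boundary 1))
    rw [DE.finrank_chains] at h1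
    norm_num at h1
    exact h1
  -- rank-nullity
  have hf2 : Module.finrank (ZMod 2) (LinearMap.range (K.boundary 2))
      + Module.finrank (ZMod 2) (LinearMap.ker (K.boundary 2)) = K.fnum 2 := by
    rw [← DE.finrank_chains K 2]
    exact LinearMap.finrank_range_add_finrank_ker (K.boundary 2)
  have hf1 : Module.finrank (ZMod 2) (LinearMap.range (K.boundary 1))
      + Module.finrank (ZMod 2) (LinearMap.ker (K.boundary 1)) = K.fnum 1 := by
    rw [← DE.finrank_chains K 1]
    exact LinearMap.finrank_range_add_finrank_ker (K.boundary 1)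
  -- range ∂2 ≤ ker ∂1
  have hsub : LinearMap.range (K.boundary 2) ≤ LinearMap.ker (K.boundary 1) := by
    rintro x ⟨c, rfl⟩
    exact LinearMap.mem_ker.mpr (DE.boundary_boundary K c)
  have hr2le : Module.finrank (ZMod 2) (LinearMap.range (K.boundary 2))
      ≤ Module.finrank (ZMod 2) (LinearMap.ker (K.boundary 1)) :=
    Submodule.finrank_mono hsub
  -- basis counting
  have hcardι : Module.finrank (ZMod 2) (LinearMap.ker (K.boundary 2)) = Fintype.card ι :=
    Module.finrank_eq_card_basis b
  have hιne : Nonempty ι := Fintype.card_pos_iff.mp (by omega)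
  have hS : ∑ σ : {σ // σ ∈ K.facesDim 2},
        (Finset.univ.filter (fun i : ι => (b i).1 σ ≠ 0)).card
      = ∑ i : ι, SComplex.suppCard ((b i).1) := by
    simp only [SComplex.suppCard, Finset.card_filter]
    exact Finset.sum_comm
  have h4 : ∀ i : ι, 4 ≤ SComplex.suppCard ((b i).1) := fun i =>
    DE.girth_four K (b i).1 (LinearMap.mem_ker.mp (b i).2)
      (fun h0 => Module.Basis.ne_zero b i (Subtype.ext h0))
  have hzsum_ne : (∑ i : ι, b i) ≠ 0 := by
    intro h
    have h1 := Fintype.linearIndependent_iff.mp b.linearIndependent (fun _ => (1 : ZMod 2))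
      (by simpa using h) hιne.some
    exact one_ne_zero h1
  have hzker : K.boundary 2 ((∑ i : ι, b i : LinearMap.ker (K.boundary 2)) : SComplex.Chains K 2)
      = 0 := LinearMap.mem_ker.mp (∑ i : ι, b i).2
  have hzne : ((∑ i : ι, b i : LinearMap.ker (K.boundary 2)) : SComplex.Chains K 2) ≠ 0 :=
    fun h => hzsum_ne (Subtype.ext h)
  have hzval : ∀ σ : {σ // σ ∈ K.facesDim 2},
      ((∑ i : ι, b i : LinearMap.ker (K.boundary 2)) : SComplex.Chains K 2) σ
      = (((Finset.univ.filter (fun i : ι => (b i).1 σ ≠ 0)).card : ℕ) : ZMod 2) := by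
    intro σ
    have hcoe : ((∑ i : ι, b i : LinearMap.ker (K.boundary 2)) : SComplex.Chains K 2) σ
        = ∑ i : ι, (b i).1 σ := by
      rw [AddSubmonoidClass.coe_finset_sum, Finset.sum_apply]
    rw [hcoe, Finset.card_filter, Nat.cast_sum]
    apply Finset.sum_congr rfl
    intro i _
    by_cases h : (b i).1 σ = 0
    · simp [h]
    · have h1 : (b i).1 σ = 1 := by
        have hx : ∀ x : ZMod 2, x ≠ 0 → x = 1 := by decide
        exact hx _ h
      rw [h1]
      norm_num
  have hsupp : Finset.univ.filter
        (fun σ : {σ // σ ∈ K.facesDim 2} =>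
          ((∑ i : ι, b i : LinearMap.ker (K.boundary 2)) : SComplex.Chains K 2) σ ≠ 0)
      ⊆ Finset.univ.filter
        (fun σ => (Finset.univ.filter (fun i : ι => (b i).1 σ ≠ 0)).card = 1) := by
    intro σ hσ
    have hzσ := (Finset.mem_filter.mp hσ).2
    rw [hzval σ] at hzσ
    have hdvd : ¬ (2 ∣ (Finset.univ.filter (fun i : ι => (b i).1 σ ≠ 0)).card) :=
      fun hd => hzσ ((ZMod.natCast_eq_zero_iff _ _).mpr hd)
    have hle2 := hb2 σ
    refine Finset.mem_filter.mpr ⟨Finset.mem_univ _, ?_⟩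
    omega
  have h4' : 4 ≤ (Finset.univ.filter
      (fun σ : {σ // σ ∈ K.facesDim 2} =>
        (Finset.univ.filter (fun i : ι => (b i).1 σ ≠ 0)).card = 1)).card :=
    le_trans (DE.girth_four K _ hzker hzne) (Finset.card_le_card hsupp)
  have hsum2 : ∑ σ : {σ // σ ∈ K.facesDim 2},
        (Finset.univ.filter (fun i : ι => (b i).1 σ ≠ 0)).card
      + (Finset.univ.filter
          (fun σ : {σ // σ ∈ K.facesDim 2} =>
            (Finset.univ.filter (fun i : ι => (b i).1 σ ≠ 0)).card = 1)).card
      ≤ 2 * K.fnum 2 := by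
    rw [Finset.card_filter, ← Finset.sum_add_distrib]
    have hpt : ∀ σ ∈ (Finset.univ : Finset {σ // σ ∈ K.facesDim 2}),
        (Finset.univ.filter (fun i : ι => (b i).1 σ ≠ 0)).card
          + (if (Finset.univ.filter (fun i : ι => (b i).1 σ ≠ 0)).card = 1 then 1 else 0)
          ≤ 2 := by
      intro σ _
      have := hb2 σ
      split_ifs with h <;> omega
    calc ∑ σ : {σ // σ ∈ K.facesDim 2},
          ((Finset.univ.filter (fun i : ι => (b i).1 σ ≠ 0)).card
            + if (Finset.univ.filter (fun i : ι => (b i).1 σ ≠ 0)).card = 1 then 1 else 0)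
        ≤ ∑ _σ : {σ // σ ∈ K.facesDim 2}, 2 := Finset.sum_le_sum hpt
      _ = 2 * K.fnum 2 := by
          rw [Finset.sum_const, Finset.card_univ, Fintype.card_coe, smul_eq_mul, Nat.mul_comm]
          rfl
  have hS4 : 4 * Fintype.card ι ≤ ∑ σ : {σ // σ ∈ K.facesDim 2},
      (Finset.univ.filter (fun i : ι => (b i).1 σ ≠ 0)).card := by
    rw [hS]
    calc 4 * Fintype.card ι = ∑ _i : ι, 4 := by
          rw [Finset.sum_const, Finset.card_univ, smul_eq_mul, Nat.mul_comm]
      _ ≤ ∑ i : ι, SComplex.suppCard ((b i).1) := Finset.sum_le_sum (fun i _ => h4 i)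
  have hbig : 4 * Module.finrank (ZMod 2) (LinearMap.ker (K.boundary 2)) + 4
      ≤ 2 * K.fnum 2 := by
    rw [hcardι]
    omega
  -- edge bound
  have hn1 : 1 ≤ K.fnum 0 := by omega
  have hVs : K.fnum 0
      = (Finset.univ.filter (fun v : V => ({v} : Finset V) ∈ K.faces)).card := by
    have himg : K.facesDim 0
        = (Finset.univ.filter (fun v : V => ({v} : Finset V) ∈ K.faces)).image
            (fun v => ({v} : Finset V)) := by
      ext σ
      simp only [SComplex.facesDim, Finset.mem_filter, Finset.mem_image]
      constructor
      · rintro ⟨hf, hc⟩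
        obtain ⟨v, rfl⟩ := Finset.card_eq_one.mp hc
        exact ⟨v, ⟨Finset.mem_univ v, hf⟩, rfl⟩
      · rintro ⟨v, hv, rfl⟩
        exact ⟨hv.2, Finset.card_singleton v⟩
    show (K.facesDim 0).card = _
    rw [himg, Finset.card_image_of_injOn]
    intro x _ y _ h
    exact Finset.singleton_injective h
  have hedge : 2 * K.fnum 1 ≤ K.fnum 0 * (K.fnum 0 - 1) := by
    have hsubE : K.facesDim 1
        ⊆ (Finset.univ.filter (fun v : V => ({v} : Finset V) ∈ K.faces)).powersetCard 2 := by
      intro e he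
      obtain ⟨hef, hec⟩ := Finset.mem_filter.mp he
      refine Finset.mem_powersetCard.mpr ⟨?_, hec⟩
      intro v hv
      refine Finset.mem_filter.mpr ⟨Finset.mem_univ _, ?_⟩
      exact K.down_closed e hef {v} (Finset.singleton_subset_iff.mpr hv)
        (Finset.singleton_ne_empty v)
    have h1 : K.fnum 1
        ≤ ((Finset.univ.filter (fun v : V => ({v} : Finset V) ∈ K.faces)).card).choose 2 := by
      rw [← Finset.card_powersetCard]
      exact Finset.card_le_card hsubE
    have h2 : 2 * ((Finset.univ.filter
          (fun v : V => ({v} : Finset V) ∈ K.faces)).card).choose 2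
        ≤ (Finset.univ.filter (fun v : V => ({v} : Finset V) ∈ K.faces)).card
          * ((Finset.univ.filter (fun v : V => ({v} : Finset V) ∈ K.faces)).card - 1) := by
      rw [Nat.choose_two_right]
      calc 2 * ((Finset.univ.filter (fun v : V => ({v} : Finset V) ∈ K.faces)).card
            * ((Finset.univ.filter (fun v : V => ({v} : Finset V) ∈ K.faces)).card - 1) / 2)
          = (Finset.univ.filter (fun v : V => ({v} : Finset V) ∈ K.faces)).card
            * ((Finset.univ.filter (fun v : V => ({v} : Finset V) ∈ K.faces)).card - 1) / 2
            * 2 := by ring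
        _ ≤ _ := Nat.div_mul_le_self _ _
    rw [hVs]
    omega
  -- final arithmetic
  have hkey : K.fnum 2 + 2 * K.fnum 0 ≤ 2 * K.fnum 1 := by omega
  have hcast : (K.fnum 2 : ℤ) + 2 * (K.fnum 0 : ℤ) ≤ 2 * (K.fnum 1 : ℤ) := by
    exact_mod_cast hkey
  have hedge' : 2 * (K.fnum 1 : ℤ) ≤ (K.fnum 0 : ℤ) * ((K.fnum 0 : ℤ) - 1) := by
    zify [hn1] at hedge
    exact hedge
  have hring : (K.fnum 0 : ℤ) * ((K.fnum 0 : ℤ) - 3)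
      = (K.fnum 0 : ℤ) * ((K.fnum 0 : ℤ) - 1) - 2 * (K.fnum 0 : ℤ) := by ring
  linarith
end

section
/- (Proposition 13) Let Σ be a finite connected balanced 2-dimensional simplicial complex with β_2(Σ) ≥ 1 such that the space Z_2(Σ) of Z_2 2-cycles admits a 2-complete basis (by Theorem 2 of the paper, this holds whenever Σ embeds into ℝ^{3}). Then 9·f_2(Σ) ≤ 4·(n^2 − 3n), where n is the number of vertices of Σ. -/
open Finset

open SComplex
namespace Prop13Aux
open SComplex Finset

variable {V : Type} [DecidableEq V] [Fintype V]

lemma boundary_apply (K : SComplex V) (i : ℕ) (hi : i ≠ 0) (c : Chains K i)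
    (τ : {σ // σ ∈ K.facesDim (i-1)}) :
    K.boundary i c τ =
      ∑ σ : {σ // σ ∈ K.facesDim i}, if (τ : Finset V) ⊆ (σ : Finset V) then c σ else 0 := by
  unfold SComplex.boundary
  rw [if_neg hi]
  rfl

lemma tri_struct {K : SComplex V} {σ : Finset V} (h : σ ∈ K.facesDim 2) {v : V} (hv : v ∈ σ) :
    ∃ a b, v ≠ a ∧ v ≠ b ∧ a ≠ b ∧ σ = {v, a, b} := by
  have hcard : σ.card = 3 := (Finset.mem_filter.mp h).2
  have hec : (σ.erase v).card = 2 := by rw [Finset.card_erase_of_mem hv, hcard]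
  obtain ⟨a, b, hab, he⟩ := Finset.card_eq_two.mp hec
  have hva : v ≠ a := by
    have : a ∈ σ.erase v := by rw [he]; simp
    exact fun hh => (Finset.mem_erase.mp this).1 hh.symm
  have hvb : v ≠ b := by
    have : b ∈ σ.erase v := by rw [he]; simp
    exact fun hh => (Finset.mem_erase.mp this).1 hh.symm
  refine ⟨a, b, hva, hvb, hab, ?_⟩
  rw [← Finset.insert_erase hv, he]

lemma color_surj {σ : Finset V} (hcard : σ.card = 3) (χ : V → Fin 3)
    (hinj : Set.InjOn χ (σ : Set V)) (t : Fin 3) : ∃ x ∈ σ, χ x = t := by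
  have h1 : (σ.image χ).card = 3 := by rw [Finset.card_image_of_injOn hinj, hcard]
  have h2 : σ.image χ = Finset.univ := Finset.eq_univ_of_card _ (by simp [h1])
  have := Finset.mem_univ t
  rw [← h2, Finset.mem_image] at this
  obtain ⟨x, hx, hxt⟩ := this
  exact ⟨x, hx, hxt⟩

lemma girth8 (K : SComplex V) (χ : V → Fin 3)
    (hχ : ∀ σ ∈ K.faces, Set.InjOn χ (σ : Set V))
    (c : Chains K 2) (hc : K.boundary 2 c = 0) (hne : c ≠ 0) :
    8 ≤ suppCard c := by
  classical
  have hface : ∀ σ : {σ // σ ∈ K.facesDim 2}, σ.1 ∈ K.faces ∧ σ.1.card = 3 :=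
    fun σ => Finset.mem_filter.mp σ.2
  have hzm : ∀ y : ZMod 2, y ≠ 0 → y = 1 := by decide
  set S : Finset {σ // σ ∈ K.facesDim 2} := Finset.univ.filter (fun σ => c σ ≠ 0) with hS
  have hSsupp : suppCard c = S.card := rfl
  set W : Finset V := S.biUnion (fun σ => σ.1) with hW
  have hmemW : ∀ v : V, v ∈ W ↔ ∃ σ ∈ S, v ∈ σ.1 := by
    intro v; simp [hW]
  -- fibers over an edge are even and of size ≥ 2
  have hfib : ∀ v x : V, v ≠ x → (∃ σ ∈ S, v ∈ σ.1 ∧ x ∈ σ.1) →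
      2 ≤ (S.filter (fun σ => v ∈ σ.1 ∧ x ∈ σ.1)).card ∧
      2 ∣ (S.filter (fun σ => v ∈ σ.1 ∧ x ∈ σ.1)).card := by
    intro v x hvx ⟨σw, hσwS, hvw, hxw⟩
    have hedge : ({v, x} : Finset V) ∈ K.facesDim 1 := by
      refine Finset.mem_filter.mpr ⟨K.down_closed σw.1 (hface σw).1 _ ?_ ?_, ?_⟩
      · intro y hy
        simp only [Finset.mem_insert, Finset.mem_singleton] at hy
        rcases hy with rfl | rfl <;> assumption
      · simp
      · rw [Finset.card_pair hvx]
    have h0 : K.boundary 2 c ⟨{v, x}, hedge⟩ = 0 := by rw [hc]; rfl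
    rw [boundary_apply K 2 (by norm_num)] at h0
    have hrw : ∀ σ : {σ // σ ∈ K.facesDim 2},
        (if (({v, x} : Finset V) : Finset V) ⊆ (σ : Finset V) then c σ else 0) =
        (if c σ ≠ 0 ∧ v ∈ σ.1 ∧ x ∈ σ.1 then (1 : ZMod 2) else 0) := by
      intro σ
      by_cases h1 : c σ = 0
      · by_cases h2 : ({v, x} : Finset V) ⊆ σ.1 <;> simp [h1, h2]
      · have hsub : (({v, x} : Finset V) ⊆ σ.1) ↔ (v ∈ σ.1 ∧ x ∈ σ.1) := by
          simp [Finset.insert_subset_iff]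
        by_cases h2 : ({v, x} : Finset V) ⊆ σ.1
        · simp [h2, h1, hsub.mp h2, hzm _ h1]
        · simp only [if_neg h2]
          rw [if_neg]
          intro ⟨_, hmem⟩
          exact h2 (hsub.mpr hmem)
    rw [Finset.sum_congr rfl (fun σ _ => hrw σ), Finset.sum_boole] at h0
    have hdvd : 2 ∣ (Finset.univ.filter
        (fun σ : {σ // σ ∈ K.facesDim 2} => c σ ≠ 0 ∧ v ∈ σ.1 ∧ x ∈ σ.1)).card :=
      (ZMod.natCast_eq_zero_iff _ 2).mp h0
    have hfeq : S.filter (fun σ => v ∈ σ.1 ∧ x ∈ σ.1) =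
        Finset.univ.filter (fun σ : {σ // σ ∈ K.facesDim 2} => c σ ≠ 0 ∧ v ∈ σ.1 ∧ x ∈ σ.1) := by
      rw [hS, Finset.filter_filter]
    rw [hfeq]
    have hne' : σw ∈ Finset.univ.filter
        (fun σ : {σ // σ ∈ K.facesDim 2} => c σ ≠ 0 ∧ v ∈ σ.1 ∧ x ∈ σ.1) := by
      refine Finset.mem_filter.mpr ⟨Finset.mem_univ _, ?_, hvw, hxw⟩
      exact (Finset.mem_filter.mp hσwS).2
    have hpos : 0 < (Finset.univ.filter
        (fun σ : {σ // σ ∈ K.facesDim 2} => c σ ≠ 0 ∧ v ∈ σ.1 ∧ x ∈ σ.1)).card :=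
      Finset.card_pos.mpr ⟨σw, hne'⟩
    have hdvd2 := hdvd
    obtain ⟨m, hm⟩ := hdvd2
    exact ⟨by omega, hdvd⟩
  -- link lemma
  have hlink : ∀ σ₀ ∈ S, ∀ v ∈ σ₀.1, ∀ a ∈ σ₀.1, v ≠ a →
      ∃ a', a' ≠ a ∧ χ a' = χ a ∧ ∃ σ₁ ∈ S, v ∈ σ₁.1 ∧ a' ∈ σ₁.1 := by
    intro σ₀ hσ₀ v hv a ha hva
    obtain ⟨x, y, hvx, hvy, hxy, hstruct⟩ := tri_struct σ₀.2 hv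
    have haxy : a = x ∨ a = y := by
      have : a ∈ ({v, x, y} : Finset V) := hstruct ▸ ha
      simp only [Finset.mem_insert, Finset.mem_singleton] at this
      rcases this with rfl | h | h
      · exact absurd rfl hva
      · exact Or.inl h
      · exact Or.inr h
    obtain ⟨b, hbmem, hab, hvb⟩ : ∃ b, b ∈ σ₀.1 ∧ a ≠ b ∧ v ≠ b := by
      rcases haxy with rfl | rfl
      · exact ⟨y, by rw [hstruct]; simp, hxy, hvy⟩
      · exact ⟨x, by rw [hstruct]; simp, fun h => hxy h.symm, hvx⟩
    obtain ⟨h2le, _⟩ := hfib v b hvb ⟨σ₀, hσ₀, hv, hbmem⟩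
    obtain ⟨σ₁, hσ₁mem, hσ₁ne⟩ :=
      Finset.exists_mem_ne (s := S.filter (fun σ => v ∈ σ.1 ∧ b ∈ σ.1)) (by omega) σ₀
    have hσ₁S : σ₁ ∈ S := Finset.mem_of_mem_filter _ hσ₁mem
    obtain ⟨hvσ₁, hbσ₁⟩ := (Finset.mem_filter.mp hσ₁mem).2
    have haσ₁ : a ∉ σ₁.1 := by
      intro hmem
      have hsub : ({v, a, b} : Finset V) ⊆ σ₁.1 := by
        intro z hz
        simp only [Finset.mem_insert, Finset.mem_singleton] at hz
        rcases hz with rfl | rfl | rfl <;> assumption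
      have hcard3 : ({v, a, b} : Finset V).card = 3 := by
        rw [Finset.card_insert_of_notMem (by simp [hva, hvb]), Finset.card_pair hab]
      have he1 : ({v, a, b} : Finset V) = σ₁.1 :=
        Finset.eq_of_subset_of_card_le hsub (by rw [(hface σ₁).2, hcard3])
      have hsub0 : ({v, a, b} : Finset V) ⊆ σ₀.1 := by
        intro z hz
        simp only [Finset.mem_insert, Finset.mem_singleton] at hz
        rcases hz with rfl | rfl | rfl <;> assumption
      have he0 : ({v, a, b} : Finset V) = σ₀.1 :=
        Finset.eq_of_subset_of_card_le hsub0 (by rw [(hface σ₀).2, hcard3])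
      exact hσ₁ne (Subtype.ext (he1 ▸ he0 ▸ rfl))
    obtain ⟨a', ha'σ₁, ha'col⟩ := color_surj (hface σ₁).2 χ (hχ _ (hface σ₁).1) (χ a)
    exact ⟨a', fun h => haσ₁ (h ▸ ha'σ₁), ha'col, σ₁, hσ₁S, hvσ₁, ha'σ₁⟩
  -- degree lemma
  have hdeg : ∀ v ∈ W, 4 ≤ (S.filter (fun σ => v ∈ σ.1)).card := by
    intro v hv
    obtain ⟨σ₀, hσ₀, hvσ₀⟩ := (hmemW v).mp hv
    obtain ⟨a, b, hva, hvb, hab, hstruct⟩ := tri_struct σ₀.2 hvσ₀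
    have haσ₀ : a ∈ σ₀.1 := by rw [hstruct]; simp
    obtain ⟨a', ha'a, hcol, σ₁, hσ₁, hvσ₁, ha'σ₁⟩ := hlink σ₀ hσ₀ v hvσ₀ a haσ₀ hva
    have hχva : χ v ≠ χ a := by
      intro h
      exact hva (hχ σ₀.1 (hface σ₀).1 (Finset.mem_coe.mpr hvσ₀) (Finset.mem_coe.mpr haσ₀) h)
    have hva' : v ≠ a' := fun h => hχva (by rw [h, hcol])
    obtain ⟨h1, -⟩ := hfib v a hva ⟨σ₀, hσ₀, hvσ₀, haσ₀⟩
    obtain ⟨h2, -⟩ := hfib v a' hva' ⟨σ₁, hσ₁, hvσ₁, ha'σ₁⟩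
    have hdisj : Disjoint (S.filter (fun σ => v ∈ σ.1 ∧ a ∈ σ.1))
        (S.filter (fun σ => v ∈ σ.1 ∧ a' ∈ σ.1)) := by
      rw [Finset.disjoint_left]
      intro σ hσa hσa'
      obtain ⟨hvσ, haσ⟩ := (Finset.mem_filter.mp hσa).2
      obtain ⟨-, ha'σ⟩ := (Finset.mem_filter.mp hσa').2
      exact ha'a (hχ σ.1 (hface σ).1 (Finset.mem_coe.mpr ha'σ) (Finset.mem_coe.mpr haσ) hcol)
    have hsub : (S.filter (fun σ => v ∈ σ.1 ∧ a ∈ σ.1)) ∪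
        (S.filter (fun σ => v ∈ σ.1 ∧ a' ∈ σ.1)) ⊆ S.filter (fun σ => v ∈ σ.1) := by
      intro σ hσ
      rcases Finset.mem_union.mp hσ with h | h <;>
        exact Finset.mem_filter.mpr ⟨Finset.mem_of_mem_filter _ h, (Finset.mem_filter.mp h).2.1⟩
    have := Finset.card_le_card hsub
    rw [Finset.card_union_of_disjoint hdisj] at this
    omega
  -- every color class of W has at least two vertices
  have hcol2 : ∀ t : Fin 3, 2 ≤ (W.filter (fun v => χ v = t)).card := by
    intro t
    obtain ⟨σ₀, hcσ₀⟩ := Function.ne_iff.mp hne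
    have hσ₀S : σ₀ ∈ S := Finset.mem_filter.mpr ⟨Finset.mem_univ _, by simpa using hcσ₀⟩
    obtain ⟨a, haσ₀, hat⟩ := color_surj (hface σ₀).2 χ (hχ _ (hface σ₀).1) t
    obtain ⟨v, hvσ₀, hvna⟩ :=
      Finset.exists_mem_ne (s := σ₀.1) (by rw [(hface σ₀).2]; norm_num) a
    obtain ⟨a', ha'a, hcol, σ₁, hσ₁, hvσ₁, ha'σ₁⟩ := hlink σ₀ hσ₀S v hvσ₀ a haσ₀ hvna
    have haW : a ∈ W := (hmemW a).mpr ⟨σ₀, hσ₀S, haσ₀⟩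
    have ha'W : a' ∈ W := (hmemW a').mpr ⟨σ₁, hσ₁, ha'σ₁⟩
    have hsub : ({a, a'} : Finset V) ⊆ W.filter (fun v => χ v = t) := by
      intro z hz
      simp only [Finset.mem_insert, Finset.mem_singleton] at hz
      rcases hz with rfl | rfl
      · exact Finset.mem_filter.mpr ⟨haW, hat⟩
      · exact Finset.mem_filter.mpr ⟨ha'W, by rw [hcol, hat]⟩
    calc 2 = ({a, a'} : Finset V).card := (Finset.card_pair (fun h => ha'a h.symm)).symm
    _ ≤ _ := Finset.card_le_card hsub
  -- |W| ≥ 6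
  have hWcard : 6 ≤ W.card := by
    have heq : W.card = ∑ t : Fin 3, (W.filter (fun v => χ v = t)).card :=
      Finset.card_eq_sum_card_fiberwise (fun x _ => Finset.mem_univ (χ x))
    rw [heq, Fin.sum_univ_three]
    have h0 := hcol2 0
    have h1 := hcol2 1
    have h2 := hcol2 2
    omega
  -- double counting
  have hcount : 3 * S.card = ∑ v ∈ W, (S.filter (fun σ => v ∈ σ.1)).card := by
    have h1 : ∀ v ∈ W, (S.filter (fun σ => v ∈ σ.1)).card =
        ∑ σ ∈ S, (if v ∈ σ.1 then 1 else 0) := fun v _ => Finset.card_filter _ _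
    rw [Finset.sum_congr rfl h1, Finset.sum_comm]
    have h2 : ∀ σ ∈ S, (∑ v ∈ W, if v ∈ σ.1 then 1 else 0) = 3 := by
      intro σ hσ
      rw [← Finset.card_filter]
      have h3 : W.filter (fun v => v ∈ σ.1) = σ.1 := by
        ext z
        simp only [Finset.mem_filter]
        constructor
        · exact fun h => h.2
        · exact fun h => ⟨(hmemW z).mpr ⟨σ, hσ, h⟩, h⟩
      rw [h3, (hface σ).2]
    rw [Finset.sum_congr rfl h2, Finset.sum_const, smul_eq_mul, mul_comm]
  have hsum : ∑ v ∈ W, (S.filter (fun σ => v ∈ σ.1)).card ≥ 4 * W.card := by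
    calc ∑ v ∈ W, (S.filter (fun σ => v ∈ σ.1)).card ≥ ∑ v ∈ W, 4 :=
          Finset.sum_le_sum hdeg
    _ = 4 * W.card := by rw [Finset.sum_const, smul_eq_mul, mul_comm]
  rw [hSsupp]
  omega


end Prop13Aux
namespace Prop13Aux
open SComplex Finset

variable {V : Type} [DecidableEq V] [Fintype V]

lemma card_subtype_filter (s : Finset (Finset V)) (Q : Finset V → Prop) [DecidablePred Q] :
    (Finset.univ.filter (fun e : {σ // σ ∈ s} => Q e.1)).card = (s.filter Q).card := by
  apply Finset.card_bij (fun e _ => e.1)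
  · intro e he
    exact Finset.mem_filter.mpr ⟨e.2, (Finset.mem_filter.mp he).2⟩
  · intro e _ e' _ h
    exact Subtype.ext h
  · intro e he
    obtain ⟨h1, h2⟩ := Finset.mem_filter.mp he
    exact ⟨⟨e, h1⟩, Finset.mem_filter.mpr ⟨Finset.mem_univ _, h2⟩, rfl⟩

lemma boundary_sq (K : SComplex V) :
    LinearMap.range (K.boundary 2) ≤ LinearMap.ker (K.boundary 1) := by
  classical
  rintro x ⟨c, rfl⟩
  rw [LinearMap.mem_ker]
  funext τ
  show K.boundary 1 (K.boundary 2 c) τ = 0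
  rw [boundary_apply K 1 one_ne_zero]
  have hexp : ∀ e : {σ // σ ∈ K.facesDim 1}, K.boundary 2 c e =
      ∑ σ : {σ // σ ∈ K.facesDim 2}, if (e : Finset V) ⊆ (σ : Finset V) then c σ else 0 :=
    boundary_apply K 2 (by norm_num) c
  calc (∑ e : {σ // σ ∈ K.facesDim 1}, if (τ : Finset V) ⊆ (e : Finset V)
          then K.boundary 2 c e else 0)
      = ∑ e : {σ // σ ∈ K.facesDim 1}, ∑ σ : {σ // σ ∈ K.facesDim 2},
          if (τ : Finset V) ⊆ (e : Finset V) ∧ (e : Finset V) ⊆ (σ : Finset V)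
          then c σ else 0 := by
        apply Finset.sum_congr rfl
        intro e _
        by_cases h : (τ : Finset V) ⊆ (e : Finset V)
        · rw [if_pos h, hexp]
          apply Finset.sum_congr rfl
          intro σ _
          by_cases h2 : (e : Finset V) ⊆ (σ : Finset V) <;> simp [h, h2]
        · simp [h]
    _ = ∑ σ : {σ // σ ∈ K.facesDim 2}, ∑ e : {σ // σ ∈ K.facesDim 1},
          if (τ : Finset V) ⊆ (e : Finset V) ∧ (e : Finset V) ⊆ (σ : Finset V)
          then c σ else 0 := Finset.sum_comm
    _ = 0 := by
        apply Finset.sum_eq_zero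
        intro σ _
        rw [← Finset.sum_filter, Finset.sum_const]
        have hN : 2 ∣ (Finset.univ.filter (fun e : {σ // σ ∈ K.facesDim 1} =>
            (τ : Finset V) ⊆ (e : Finset V) ∧ (e : Finset V) ⊆ (σ : Finset V))).card := by
          rw [card_subtype_filter (K.facesDim 1)
            (fun e => (τ : Finset V) ⊆ e ∧ e ⊆ σ.1)]
          obtain ⟨u, hu⟩ := Finset.card_eq_one.mp (Finset.mem_filter.mp τ.2).2
          by_cases huσ : u ∈ σ.1
          · obtain ⟨a, b, hua, hub, hab, hstruct⟩ := tri_struct σ.2 huσ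
            have hσf : σ.1 ∈ K.faces := (Finset.mem_filter.mp σ.2).1
            have hset : (K.facesDim 1).filter
                (fun e => (τ : Finset V) ⊆ e ∧ e ⊆ σ.1) =
                {({u, a} : Finset V), ({u, b} : Finset V)} := by
              ext e
              simp only [Finset.mem_filter, Finset.mem_insert, Finset.mem_singleton, hu,
                Finset.singleton_subset_iff]
              constructor
              · rintro ⟨he1, hue, hesub⟩
                have hc2 : e.card = 2 := (Finset.mem_filter.mp he1).2
                obtain ⟨p, q, hpq, rfl⟩ := Finset.card_eq_two.mp hc2
                simp only [Finset.mem_insert, Finset.mem_singleton] at hue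
                have hmem : ∀ w, w ∈ ({p, q} : Finset V) → w ∈ ({u, a, b} : Finset V) := by
                  intro w hw; rw [← hstruct]; exact hesub hw
                rcases hue with rfl | rfl
                · have hq := hmem q (by simp)
                  simp only [Finset.mem_insert, Finset.mem_singleton] at hq
                  rcases hq with rfl | rfl | rfl
                  · exact absurd rfl hpq
                  · exact Or.inl rfl
                  · exact Or.inr rfl
                · have hp := hmem p (by simp)
                  simp only [Finset.mem_insert, Finset.mem_singleton] at hp
                  have hpc : p = a ∨ p = b := by
                    rcases hp with h | h | h
                    · exact absurd h hpq
                    · exact Or.inl h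
                    · exact Or.inr h
                  rcases hpc with rfl | rfl
                  · exact Or.inl (Finset.pair_comm p u)
                  · exact Or.inr (Finset.pair_comm p u)
              · have hsub2 : ∀ w, w ∈ ({u, a, b} : Finset V) → w ∈ σ.1 := by
                  intro w hw; rw [hstruct]; exact hw
                rintro (rfl | rfl)
                · refine ⟨Finset.mem_filter.mpr ⟨K.down_closed _ hσf _ ?_ (by simp),
                    Finset.card_pair hua⟩, by simp, ?_⟩
                  · intro w hw
                    simp only [Finset.mem_insert, Finset.mem_singleton] at hw
                    rcases hw with rfl | rfl
                    · exact huσ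
                    · exact hsub2 _ (by simp)
                  · intro w hw
                    simp only [Finset.mem_insert, Finset.mem_singleton] at hw
                    rcases hw with rfl | rfl
                    · exact huσ
                    · exact hsub2 _ (by simp)
                · refine ⟨Finset.mem_filter.mpr ⟨K.down_closed _ hσf _ ?_ (by simp),
                    Finset.card_pair hub⟩, by simp, ?_⟩
                  · intro w hw
                    simp only [Finset.mem_insert, Finset.mem_singleton] at hw
                    rcases hw with rfl | rfl
                    · exact huσ
                    · exact hsub2 _ (by simp)
                  · intro w hw
                    simp only [Finset.mem_insert, Finset.mem_singleton] at hw
                    rcases hw with rfl | rfl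
                    · exact huσ
                    · exact hsub2 _ (by simp)
            rw [hset]
            have hne : ({u, a} : Finset V) ≠ ({u, b} : Finset V) := by
              intro h
              have : a ∈ ({u, b} : Finset V) := h ▸ (by simp : a ∈ ({u, a} : Finset V))
              simp only [Finset.mem_insert, Finset.mem_singleton] at this
              rcases this with rfl | rfl
              · exact hua rfl
              · exact hab rfl
            rw [Finset.card_insert_of_notMem (by simpa using hne), Finset.card_singleton]
          · have hset : (K.facesDim 1).filter
                (fun e => (τ : Finset V) ⊆ e ∧ e ⊆ σ.1) = ∅ := by
              apply Finset.eq_empty_of_forall_notMem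
              intro e he
              obtain ⟨-, h1, h2⟩ := Finset.mem_filter.mp he
              exact huσ (h2 (h1 (hu ▸ (by simp : u ∈ ({u} : Finset V)))))
            rw [hset, Finset.card_empty]
            exact ⟨0, rfl⟩
        obtain ⟨m, hm⟩ := hN
        rw [hm, mul_smul, two_smul, CharTwo.add_self_eq_zero]

end Prop13Aux
namespace Prop13Aux
open SComplex Finset

variable {V : Type} [DecidableEq V] [Fintype V]

lemma fnum0_eq (K : SComplex V) :
    K.fnum 0 = (Finset.univ.filter (fun v : V => ({v} : Finset V) ∈ K.faces)).card := by
  classical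
  have himg : K.facesDim 0 =
      (Finset.univ.filter (fun v : V => ({v} : Finset V) ∈ K.faces)).image
        (fun v => ({v} : Finset V)) := by
    ext σ
    simp only [Finset.mem_image, Finset.mem_filter, Finset.mem_univ, true_and, facesDim]
    constructor
    · rintro ⟨hσ, hcard⟩
      obtain ⟨v, rfl⟩ := Finset.card_eq_one.mp hcard
      exact ⟨v, hσ, rfl⟩
    · rintro ⟨v, hv, rfl⟩
      exact ⟨hv, Finset.card_singleton v⟩
  unfold SComplex.fnum
  rw [himg, Finset.card_image_of_injective _ Finset.singleton_injective]

lemma pair_bound (K : SComplex V) (χ : V → Fin 3) (s t : Fin 3) (hst : s ≠ t) :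
    ((K.facesDim 1).filter (fun e => (∃ x ∈ e, χ x = s) ∧ (∃ y ∈ e, χ y = t))).card ≤
      ((Finset.univ.filter (fun v : V => ({v} : Finset V) ∈ K.faces)).filter
          (fun v => χ v = s)).card *
      ((Finset.univ.filter (fun v : V => ({v} : Finset V) ∈ K.faces)).filter
          (fun v => χ v = t)).card := by
  classical
  set V₀ := Finset.univ.filter (fun v : V => ({v} : Finset V) ∈ K.faces) with hV₀
  set E := (K.facesDim 1).filter (fun e => (∃ x ∈ e, χ x = s) ∧ (∃ y ∈ e, χ y = t)) with hE
  by_cases hEne : E.Nonempty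
  · obtain ⟨e₀, he₀⟩ := hEne
    have he₀card : e₀.card = 2 := (Finset.mem_filter.mp (Finset.mem_of_mem_filter _ he₀)).2
    obtain ⟨v₀, hv₀⟩ := Finset.card_pos.mp (by omega : 0 < e₀.card)
    rw [← Finset.card_product]
    apply Finset.card_le_card_of_injOn
      (fun e => ((if h : ∃ x ∈ e, χ x = s then h.choose else v₀),
                 (if h : ∃ x ∈ e, χ x = t then h.choose else v₀)))
    · intro e he
      obtain ⟨heE, hs, ht⟩ := Finset.mem_filter.mp he
      have hef : e ∈ K.faces := (Finset.mem_filter.mp heE).1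
      beta_reduce
      rw [dif_pos hs, dif_pos ht]
      have h1 := hs.choose_spec
      have h2 := ht.choose_spec
      refine Finset.mem_product.mpr ⟨Finset.mem_filter.mpr ⟨?_, h1.2⟩,
        Finset.mem_filter.mpr ⟨?_, h2.2⟩⟩
      · exact Finset.mem_filter.mpr ⟨Finset.mem_univ _,
          K.down_closed _ hef _ (Finset.singleton_subset_iff.mpr h1.1) (by simp)⟩
      · exact Finset.mem_filter.mpr ⟨Finset.mem_univ _,
          K.down_closed _ hef _ (Finset.singleton_subset_iff.mpr h2.1) (by simp)⟩
    · have key : ∀ e ∈ E, e = {(if h : ∃ x ∈ e, χ x = s then h.choose else v₀),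
          (if h : ∃ x ∈ e, χ x = t then h.choose else v₀)} := by
        intro e he
        obtain ⟨heE, hs, ht⟩ := Finset.mem_filter.mp he
        rw [dif_pos hs, dif_pos ht]
        have h1 := hs.choose_spec
        have h2 := ht.choose_spec
        have hne : hs.choose ≠ ht.choose := by
          intro h
          exact hst (h1.2 ▸ h ▸ h2.2)
        have hsub : ({hs.choose, ht.choose} : Finset V) ⊆ e := by
          intro z hz
          simp only [Finset.mem_insert, Finset.mem_singleton] at hz
          rcases hz with rfl | rfl
          · exact h1.1
          · exact h2.1
        have hecard : e.card = 2 := (Finset.mem_filter.mp heE).2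
        exact (Finset.eq_of_subset_of_card_le hsub
          (by rw [hecard, Finset.card_pair hne])).symm
      intro e he e' he' heq
      simp only [Prod.mk.injEq] at heq
      rw [key e (Finset.mem_coe.mp he), key e' (Finset.mem_coe.mp he'), heq.1, heq.2]
  · rw [Finset.not_nonempty_iff_eq_empty] at hEne
    rw [hEne, Finset.card_empty]
    exact Nat.zero_le _

lemma f1_bound (K : SComplex V) (χ : V → Fin 3)
    (hχ : ∀ σ ∈ K.faces, Set.InjOn χ (σ : Set V)) :
    3 * K.fnum 1 ≤ K.fnum 0 * K.fnum 0 := by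
  classical
  set V₀ := Finset.univ.filter (fun v : V => ({v} : Finset V) ∈ K.faces) with hV₀
  set P : Fin 3 → Fin 3 → Finset (Finset V) := fun s t =>
    (K.facesDim 1).filter (fun e => (∃ x ∈ e, χ x = s) ∧ (∃ y ∈ e, χ y = t)) with hP
  have hcover : K.facesDim 1 ⊆ P 0 1 ∪ P 0 2 ∪ P 1 2 := by
    intro e he
    have hecard : e.card = 2 := (Finset.mem_filter.mp he).2
    obtain ⟨x, y, hxy, rfl⟩ := Finset.card_eq_two.mp hecard
    have hcolne : χ x ≠ χ y := by
      intro h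
      exact hxy (hχ _ (Finset.mem_filter.mp he).1 (by simp) (by simp) h)
    have hcases : ∀ a b : Fin 3, a ≠ b →
        ((a = 0 ∧ b = 1) ∨ (b = 0 ∧ a = 1)) ∨ ((a = 0 ∧ b = 2) ∨ (b = 0 ∧ a = 2)) ∨
        ((a = 1 ∧ b = 2) ∨ (b = 1 ∧ a = 2)) := by decide
    have hx : x ∈ ({x, y} : Finset V) := by simp
    have hy : y ∈ ({x, y} : Finset V) := by simp
    rcases hcases (χ x) (χ y) hcolne with (⟨h1, h2⟩ | ⟨h1, h2⟩) | (⟨h1, h2⟩ | ⟨h1, h2⟩) |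
        (⟨h1, h2⟩ | ⟨h1, h2⟩) <;>
      simp only [Finset.mem_union, hP, Finset.mem_filter]
    · exact Or.inl (Or.inl ⟨he, ⟨x, hx, h1⟩, ⟨y, hy, h2⟩⟩)
    · exact Or.inl (Or.inl ⟨he, ⟨y, hy, h1⟩, ⟨x, hx, h2⟩⟩)
    · exact Or.inl (Or.inr ⟨he, ⟨x, hx, h1⟩, ⟨y, hy, h2⟩⟩)
    · exact Or.inl (Or.inr ⟨he, ⟨y, hy, h1⟩, ⟨x, hx, h2⟩⟩)
    · exact Or.inr ⟨he, ⟨x, hx, h1⟩, ⟨y, hy, h2⟩⟩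
    · exact Or.inr ⟨he, ⟨y, hy, h1⟩, ⟨x, hx, h2⟩⟩
  set n : Fin 3 → ℕ := fun t => (V₀.filter (fun v => χ v = t)).card with hn
  have hb01 : (P 0 1).card ≤ n 0 * n 1 := pair_bound K χ 0 1 (by decide)
  have hb02 : (P 0 2).card ≤ n 0 * n 2 := pair_bound K χ 0 2 (by decide)
  have hb12 : (P 1 2).card ≤ n 1 * n 2 := pair_bound K χ 1 2 (by decide)
  have hf1 : K.fnum 1 ≤ n 0 * n 1 + n 0 * n 2 + n 1 * n 2 := by
    calc K.fnum 1 ≤ (P 0 1 ∪ P 0 2 ∪ P 1 2).card := Finset.card_le_card hcover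
    _ ≤ (P 0 1 ∪ P 0 2).card + (P 1 2).card := Finset.card_union_le _ _
    _ ≤ (P 0 1).card + (P 0 2).card + (P 1 2).card := by
        have := Finset.card_union_le (P 0 1) (P 0 2)
        omega
    _ ≤ n 0 * n 1 + n 0 * n 2 + n 1 * n 2 := by omega
  have hnsum : n 0 + n 1 + n 2 = K.fnum 0 := by
    rw [fnum0_eq, ← hV₀]
    rw [Finset.card_eq_sum_card_fiberwise (f := χ) (t := Finset.univ)
      (fun x _ => Finset.mem_univ (χ x)), Fin.sum_univ_three]
  nlinarith [sq_nonneg (n 0 - n 1 : ℤ), sq_nonneg (n 0 - n 2 : ℤ), sq_nonneg (n 1 - n 2 : ℤ),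
    hf1, hnsum]

end Prop13Aux
namespace Prop13Aux
open SComplex Finset

variable {V : Type} [DecidableEq V] [Fintype V]

lemma finrank_chains (K : SComplex V) (i : ℕ) :
    Module.finrank (ZMod 2) (Chains K i) = K.fnum i := by
  rw [Module.finrank_fintype_fun_eq_card]
  exact Fintype.card_coe _

lemma boundary_zero (K : SComplex V) : K.boundary 0 = 0 := by
  unfold SComplex.boundary
  rw [if_pos rfl]

lemma rank3 (K : SComplex V) (hdim : ∀ σ ∈ K.faces, σ.card ≤ 3) :
    Module.finrank (ZMod 2) (LinearMap.range (K.boundary 3)) = 0 := by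
  have hempty : IsEmpty {σ // σ ∈ K.facesDim 3} := by
    constructor
    rintro ⟨σ, hσ⟩
    have h1 := (Finset.mem_filter.mp hσ).2
    have h2 := hdim σ (Finset.mem_filter.mp hσ).1
    omega
  have h1 : Module.finrank (ZMod 2) (Chains K 3) = 0 := by
    rw [Module.finrank_fintype_fun_eq_card, Fintype.card_eq_zero]
  have h2 := LinearMap.finrank_range_le (K.boundary 3)
  omega

end Prop13Aux

set_option maxHeartbeats 1000000 in
open SComplex Prop13Aux in
theorem prop13' {V : Type} [DecidableEq V] [Fintype V]
    (K : SComplex V) (hdim : K.IsDim 2) (hbal : K.IsBalanced 2) (hconn : K.betti 0 = 1)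
    (hβ : 1 ≤ K.betti 2) (hcb : K.HasCompleteBasis 2 2) :
    (9 : ℤ) * (K.fnum 2 : ℤ) ≤ 4 * ((K.fnum 0 : ℤ) ^ 2 - 3 * (K.fnum 0 : ℤ)) := by
  classical
  obtain ⟨χ, hχ⟩ := hbal
  have hzm : ∀ y : ZMod 2, y ≠ 0 → y = 1 := by decide
  -- Betti number computations
  have hker0 : Module.finrank (ZMod 2) (LinearMap.ker (K.boundary 0)) = K.fnum 0 := by
    rw [boundary_zero, LinearMap.ker_zero, finrank_top]
    exact finrank_chains K 0
  have hconn' : K.fnum 0 - Module.finrank (ZMod 2) (LinearMap.range (K.boundary 1)) = 1 := by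
    unfold SComplex.betti at hconn
    norm_num at hconn
    rw [hker0] at hconn
    exact hconn
  have hB2 : K.betti 2 = Module.finrank (ZMod 2) (LinearMap.ker (K.boundary 2)) := by
    unfold SComplex.betti
    norm_num
    rw [rank3 K hdim.1]
    omega
  have hz2pos : 1 ≤ Module.finrank (ZMod 2) (LinearMap.ker (K.boundary 2)) := hB2 ▸ hβ
  have hrn1 : Module.finrank (ZMod 2) (LinearMap.range (K.boundary 1)) +
      Module.finrank (ZMod 2) (LinearMap.ker (K.boundary 1)) = K.fnum 1 :=
    (LinearMap.finrank_range_add_finrank_ker _).trans (finrank_chains K 1)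
  have hrn2 : Module.finrank (ZMod 2) (LinearMap.range (K.boundary 2)) +
      Module.finrank (ZMod 2) (LinearMap.ker (K.boundary 2)) = K.fnum 2 :=
    (LinearMap.finrank_range_add_finrank_ker _).trans (finrank_chains K 2)
  have hr1le : Module.finrank (ZMod 2) (LinearMap.range (K.boundary 1)) ≤ K.fnum 0 :=
    le_trans (Submodule.finrank_le _) (le_of_eq (finrank_chains K 0))
  have hr2le : Module.finrank (ZMod 2) (LinearMap.range (K.boundary 2)) ≤
      Module.finrank (ZMod 2) (LinearMap.ker (K.boundary 1)) :=
    Submodule.finrank_mono (boundary_sq K)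
  -- the complete basis
  obtain ⟨ι, hι, b, hb⟩ := hcb
  letI : Fintype ι := hι
  have hcardι : Fintype.card ι = Module.finrank (ZMod 2) (LinearMap.ker (K.boundary 2)) :=
    (Module.finrank_eq_card_basis b).symm
  -- girth bound for each basis element
  have hgirth : ∀ i : ι, 8 ≤ suppCard ((b i : Chains K 2)) := by
    intro i
    apply girth8 K χ hχ
    · exact LinearMap.mem_ker.mp (b i).2
    · intro h0
      exact b.ne_zero i (Subtype.ext h0)
  -- counting
  set cnt : {σ // σ ∈ K.facesDim 2} → ℕ :=
    fun σ => (Finset.univ.filter (fun i : ι => (b i : Chains K 2) σ ≠ 0)).card with hcnt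
  have hcnt2 : ∀ σ, cnt σ ≤ 2 := fun σ => hb σ
  have hsum1 : ∑ σ : {σ // σ ∈ K.facesDim 2}, cnt σ =
      ∑ i : ι, suppCard ((b i : Chains K 2)) := by
    simp only [hcnt, suppCard, Finset.card_filter]
    exact Finset.sum_comm
  have h8k : 8 * Fintype.card ι ≤ ∑ σ : {σ // σ ∈ K.facesDim 2}, cnt σ := by
    rw [hsum1]
    calc 8 * Fintype.card ι = ∑ _i : ι, 8 := by
          rw [Finset.sum_const, Finset.card_univ, smul_eq_mul, mul_comm]
    _ ≤ ∑ i : ι, suppCard ((b i : Chains K 2)) :=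
          Finset.sum_le_sum (fun i _ => hgirth i)
  -- the sum of the basis is a nonzero cycle
  set c : LinearMap.ker (K.boundary 2) := ∑ i : ι, b i with hc
  have hcz : K.boundary 2 (c : Chains K 2) = 0 := LinearMap.mem_ker.mp c.2
  have hιne : Nonempty ι := Fintype.card_pos_iff.mp (by omega)
  have hcne : (c : Chains K 2) ≠ 0 := by
    intro h0
    have hc0 : c = 0 := Subtype.ext h0
    have hli := Fintype.linearIndependent_iff.mp b.linearIndependent (fun _ => (1 : ZMod 2))
    have h1 : ∑ i : ι, (1 : ZMod 2) • b i = 0 := by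
      simpa [one_smul] using hc0
    have := hli h1 hιne.some
    exact one_ne_zero this
  have hceval : ∀ σ, (c : Chains K 2) σ = (cnt σ : ZMod 2) := by
    intro σ
    have h1 : (c : Chains K 2) = ∑ i : ι, (b i : Chains K 2) := by
      rw [hc]
      push_cast
      rfl
    rw [h1, Finset.sum_apply]
    have h2 : ∀ i : ι, (b i : Chains K 2) σ =
        (if (b i : Chains K 2) σ ≠ 0 then (1 : ZMod 2) else 0) := by
      intro i
      by_cases h : (b i : Chains K 2) σ = 0
      · simp [h]
      · simp [h, hzm _ h]
    rw [Finset.sum_congr rfl (fun i _ => h2 i), Finset.sum_boole]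
  have hsupp_eq : suppCard (c : Chains K 2) =
      (Finset.univ.filter (fun σ : {σ // σ ∈ K.facesDim 2} => cnt σ = 1)).card := by
    unfold SComplex.suppCard
    apply Finset.card_bij (fun σ _ => σ) ?_ (fun _ _ _ _ h => h) ?_
    · intro σ hσ
      have h1 : (c : Chains K 2) σ ≠ 0 := (Finset.mem_filter.mp hσ).2
      rw [hceval] at h1
      have h2 := hcnt2 σ
      refine Finset.mem_filter.mpr ⟨Finset.mem_univ _, ?_⟩
      rcases (by omega : cnt σ = 0 ∨ cnt σ = 1 ∨ cnt σ = 2) with h | h | h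
      · rw [h] at h1; simp at h1
      · exact h
      · rw [h] at h1
        exact absurd (by decide : ((2 : ℕ) : ZMod 2) = 0) h1
    · intro σ hσ
      have h1 : cnt σ = 1 := (Finset.mem_filter.mp hσ).2
      refine ⟨σ, Finset.mem_filter.mpr ⟨Finset.mem_univ _, ?_⟩, rfl⟩
      rw [hceval, h1]
      decide
  have h8 : 8 ≤ (Finset.univ.filter (fun σ : {σ // σ ∈ K.facesDim 2} => cnt σ = 1)).card := by
    rw [← hsupp_eq]
    exact girth8 K χ hχ _ hcz hcne
  have hcount : (∑ σ : {σ // σ ∈ K.facesDim 2}, cnt σ) +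
      (Finset.univ.filter (fun σ : {σ // σ ∈ K.facesDim 2} => cnt σ = 1)).card ≤
      2 * K.fnum 2 := by
    rw [Finset.card_filter, ← Finset.sum_add_distrib]
    calc (∑ σ : {σ // σ ∈ K.facesDim 2}, (cnt σ + if cnt σ = 1 then 1 else 0))
        ≤ ∑ _σ : {σ // σ ∈ K.facesDim 2}, 2 := by
          apply Finset.sum_le_sum
          intro σ _
          have := hcnt2 σ
          by_cases h : cnt σ = 1 <;> simp [h] <;> omega
      _ = 2 * K.fnum 2 := by
          rw [Finset.sum_const, Finset.card_univ, Fintype.card_coe, smul_eq_mul, mul_comm]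
          rfl
  -- combine
  have hkey : 8 * Module.finrank (ZMod 2) (LinearMap.ker (K.boundary 2)) + 8 ≤
      2 * K.fnum 2 := by omega
  have hf1 : 3 * K.fnum 1 ≤ K.fnum 0 * K.fnum 0 := f1_bound K χ hχ
  have hlin : 3 * K.fnum 2 + 4 * K.fnum 0 ≤ 4 * K.fnum 1 := by omega
  have h1 : (3 : ℤ) * (K.fnum 1 : ℤ) ≤ (K.fnum 0 : ℤ) * (K.fnum 0 : ℤ) := by exact_mod_cast hf1
  have h2 : (3 : ℤ) * (K.fnum 2 : ℤ) + 4 * (K.fnum 0 : ℤ) ≤ 4 * (K.fnum 1 : ℤ) := by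
    exact_mod_cast hlin
  nlinarith [h1, h2]

/-- Proposition 13. -/
theorem prop13 {V : Type} [DecidableEq V] [Fintype V]
    (K : SComplex V) (hdim : K.IsDim 2) (hbal : K.IsBalanced 2) (hconn : K.betti 0 = 1)
    (hβ : 1 ≤ K.betti 2) (hcb : K.HasCompleteBasis 2 2) :
    (9 : ℤ) * (K.fnum 2 : ℤ) ≤ 4 * ((K.fnum 0 : ℤ) ^ 2 - 3 * (K.fnum 0 : ℤ)) := by
  exact prop13' K hdim hbal hconn hβ hcb
end

section
/- (Proposition 14) Let Σ be a finite connected 3-dimensional simplicial complex with β_3(Σ) ≥ 1 such that the space Z_3(Σ) of Z_2 3-cycles admits a 2-complete basis (by Theorem 2 of the paper, this holds whenever Σ is PL embeddable into ℝ^{4}). Then 3·f_3(Σ) ≤ 5·( f_2(Σ) − f_1(Σ) − β_2(Σ) + β_1(Σ) + n − 2 ), where n is the number of vertices of Σ. -/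
open Finset

namespace SComplex

variable {V : Type} [DecidableEq V] [Fintype V]

/-! ### Auxiliary lemmas -/

lemma mem_facesDim_iff {K : SComplex V} {i : ℕ} {σ : Finset V} :
    σ ∈ K.facesDim i ↔ σ ∈ K.faces ∧ σ.card = i + 1 := Finset.mem_filter

lemma zmod2_ne_zero {x : ZMod 2} (h : x ≠ 0) : x = 1 := by
  revert h; revert x; decide

lemma boundary_succ_apply (K : SComplex V) (i : ℕ) (c : Chains K (i + 1))
    (τ : {τ // τ ∈ K.facesDim i}) :
    K.boundary (i + 1) c τ =
      ∑ σ : {σ // σ ∈ K.facesDim (i + 1)},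
        if (τ : Finset V) ⊆ (σ : Finset V) then c σ else 0 := by
  rw [boundary, if_neg (Nat.succ_ne_zero i)]
  rfl

/-- `∂∂ = 0`. -/
lemma boundary_boundary (K : SComplex V) (i : ℕ) (c : Chains K (i + 1 + 1)) :
    K.boundary (i + 1) (K.boundary (i + 1 + 1) c) = 0 := by
  funext τ
  rw [boundary_succ_apply]
  show (∑ ρ : {ρ // ρ ∈ K.facesDim (i + 1)}, _) = (0 : ZMod 2)
  have step1 : ∀ ρ : {ρ // ρ ∈ K.facesDim (i + 1)},
      (if (τ : Finset V) ⊆ (ρ : Finset V) then K.boundary (i + 1 + 1) c ρ else 0)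
      = ∑ σ : {σ // σ ∈ K.facesDim (i + 1 + 1)},
          if (τ : Finset V) ⊆ (ρ : Finset V) ∧ (ρ : Finset V) ⊆ (σ : Finset V)
            then c σ else 0 := by
    intro ρ
    by_cases h : (τ : Finset V) ⊆ (ρ : Finset V)
    · rw [if_pos h, boundary_succ_apply]
      exact Finset.sum_congr rfl fun σ _ => by simp [h]
    · rw [if_neg h]
      exact (Finset.sum_eq_zero fun σ _ => by simp [h]).symm
  rw [Finset.sum_congr rfl fun ρ _ => step1 ρ, Finset.sum_comm]
  apply Finset.sum_eq_zero
  intro σ _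
  -- reduce to a count of middle faces
  have hconv : (∑ ρ : {ρ // ρ ∈ K.facesDim (i + 1)},
      if (τ : Finset V) ⊆ (ρ : Finset V) ∧ (ρ : Finset V) ⊆ (σ : Finset V) then c σ else 0)
      = ((K.facesDim (i + 1)).filter
          (fun ρ => (τ : Finset V) ⊆ ρ ∧ ρ ⊆ (σ : Finset V))).card • c σ := by
    rw [Finset.sum_coe_sort_eq_attach, Finset.sum_attach _
      (fun ρ => if (τ : Finset V) ⊆ ρ ∧ ρ ⊆ (σ : Finset V) then c σ else 0),
      ← Finset.sum_filter, Finset.sum_const]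
  rw [hconv]
  have hcard : ((K.facesDim (i + 1)).filter
      (fun ρ => (τ : Finset V) ⊆ ρ ∧ ρ ⊆ (σ : Finset V))).card % 2 = 0 := by
    by_cases hts : (τ : Finset V) ⊆ (σ : Finset V)
    · have hτc : (τ : Finset V).card = i + 1 := (mem_facesDim_iff.mp τ.2).2
      have hσc : (σ : Finset V).card = i + 3 := (mem_facesDim_iff.mp σ.2).2
      have hσf : (σ : Finset V) ∈ K.faces := (mem_facesDim_iff.mp σ.2).1
      have heq : (K.facesDim (i + 1)).filter
          (fun ρ => (τ : Finset V) ⊆ ρ ∧ ρ ⊆ (σ : Finset V))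
          = ((σ : Finset V) \ (τ : Finset V)).image
              (fun x => insert x (τ : Finset V)) := by
        ext ρ
        simp only [Finset.mem_filter, Finset.mem_image, Finset.mem_sdiff]
        constructor
        · rintro ⟨hρd, hτρ, hρσ⟩
          have hρc : ρ.card = i + 2 := (mem_facesDim_iff.mp hρd).2
          have h1 : (ρ \ (τ : Finset V)).card = 1 := by
            rw [Finset.card_sdiff_of_subset hτρ, hρc, hτc]
            omega
          obtain ⟨x, hx⟩ := Finset.card_eq_one.mp h1
          have hxρ : x ∈ ρ \ (τ : Finset V) := hx ▸ Finset.mem_singleton_self x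
          refine ⟨x, ⟨hρσ (Finset.mem_sdiff.mp hxρ).1, (Finset.mem_sdiff.mp hxρ).2⟩, ?_⟩
          have := Finset.union_sdiff_of_subset hτρ
          rw [hx] at this
          rw [← this, Finset.union_comm]
          rfl
        · rintro ⟨x, ⟨hxσ, hxτ⟩, rfl⟩
          have hsub : insert x (τ : Finset V) ⊆ (σ : Finset V) :=
            Finset.insert_subset hxσ hts
          refine ⟨mem_facesDim_iff.mpr ⟨?_, ?_⟩, Finset.subset_insert _ _, hsub⟩
          · exact K.down_closed _ hσf _ hsub (Finset.insert_ne_empty _ _)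
          · rw [Finset.card_insert_of_notMem hxτ, hτc]
      have hinj : Set.InjOn (fun x => insert x (τ : Finset V))
          (((σ : Finset V) \ (τ : Finset V) : Finset V) : Set V) := by
        intro x hx y hy hxy
        have hxτ : x ∉ (τ : Finset V) := (Finset.mem_sdiff.mp (Finset.mem_coe.mp hx)).2
        simp only at hxy
        have : x ∈ insert y (τ : Finset V) := hxy ▸ Finset.mem_insert_self x _
        rcases Finset.mem_insert.mp this with h | h
        · exact h
        · exact absurd h hxτ
      rw [heq, Finset.card_image_of_injOn hinj, Finset.card_sdiff_of_subset hts, hσc, hτc]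
      omega
    · rw [Finset.filter_false_of_mem, Finset.card_empty]
      intro ρ _ h
      exact absurd (h.1.trans h.2) hts
  rw [nsmul_eq_mul, (ZMod.natCast_eq_zero_iff _ _).mpr
    (Nat.dvd_of_mod_eq_zero hcard), zero_mul]

/-- Any nonzero `3`-cycle has support of size at least `5`. -/
lemma five_le_suppCard (K : SComplex V) (c : Chains K 3)
    (hc : K.boundary 3 c = 0) (hne : c ≠ 0) : 5 ≤ suppCard c := by
  classical
  obtain ⟨σ0, hσ0⟩ : ∃ σ0, c σ0 ≠ 0 := by
    by_contra h
    push_neg at h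
    exact hne (funext fun σ => h σ)
  set S : Finset {σ // σ ∈ K.facesDim 3} := Finset.univ.filter (fun σ => c σ ≠ 0) with hS
  have hσ0S : σ0 ∈ S := Finset.mem_filter.mpr ⟨Finset.mem_univ _, hσ0⟩
  have hσ0c : (σ0 : Finset V).card = 4 := (mem_facesDim_iff.mp σ0.2).2
  have hσ0f : (σ0 : Finset V) ∈ K.faces := (mem_facesDim_iff.mp σ0.2).1
  -- for each vertex of σ0 there is another support face containing the opposite facet
  have key : ∀ v : V, ∃ σ' : {σ // σ ∈ K.facesDim 3}, v ∈ (σ0 : Finset V) →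
      σ' ∈ S ∧ (σ0 : Finset V).erase v ⊆ (σ' : Finset V) ∧ σ' ≠ σ0 := by
    intro v
    by_cases hv : v ∈ (σ0 : Finset V)
    swap
    · exact ⟨σ0, fun h => absurd h hv⟩
    have hτc : ((σ0 : Finset V).erase v).card = 3 := by
      rw [Finset.card_erase_of_mem hv, hσ0c]
    have hτf : (σ0 : Finset V).erase v ∈ K.facesDim 2 := by
      refine mem_facesDim_iff.mpr ⟨K.down_closed _ hσ0f _ (Finset.erase_subset _ _) ?_, hτc⟩
      intro h
      rw [h] at hτc
      simp at hτc
    set τ : {τ // τ ∈ K.facesDim 2} := ⟨(σ0 : Finset V).erase v, hτf⟩ with hτ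
    have hz : (∑ σ : {σ // σ ∈ K.facesDim 3},
        if (τ : Finset V) ⊆ (σ : Finset V) then c σ else 0) = 0 := by
      have := congrFun hc τ
      rw [boundary_succ_apply K 2 c τ] at this
      exact this
    set T : Finset {σ // σ ∈ K.facesDim 3} :=
      Finset.univ.filter (fun σ => (τ : Finset V) ⊆ (σ : Finset V) ∧ c σ ≠ 0) with hT
    have hsum : (∑ σ : {σ // σ ∈ K.facesDim 3},
        if (τ : Finset V) ⊆ (σ : Finset V) then c σ else 0) = (T.card : ZMod 2) := by
      rw [hT, ← Finset.sum_boole]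
      apply Finset.sum_congr rfl
      intro σ _
      by_cases h1 : (τ : Finset V) ⊆ (σ : Finset V)
      · by_cases h2 : c σ = 0
        · simp [h1, h2]
        · simp [h1, h2, zmod2_ne_zero h2]
      · simp [h1]
    have hTdvd : 2 ∣ T.card := by
      apply (ZMod.natCast_eq_zero_iff _ _).mp
      rw [← hsum]; exact hz
    have hσ0T : σ0 ∈ T :=
      Finset.mem_filter.mpr ⟨Finset.mem_univ _, Finset.erase_subset _ _, hσ0⟩
    have h1T : 1 ≤ T.card := Finset.card_pos.mpr ⟨σ0, hσ0T⟩
    have h2T : 1 < T.card := by omega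
    obtain ⟨σ', hσ'T, hσ'ne⟩ := Finset.exists_mem_ne h2T σ0
    obtain ⟨-, h1, h2⟩ := Finset.mem_filter.mp hσ'T
    exact ⟨σ', fun _ => ⟨Finset.mem_filter.mpr ⟨Finset.mem_univ _, h2⟩, h1, hσ'ne⟩⟩
  choose f hf using key
  have hinj : Set.InjOn f (σ0 : Finset V) := by
    intro v hv w hw hvw
    by_contra hne'
    have hvσ : v ∈ (σ0 : Finset V) := hv
    have hwσ : w ∈ (σ0 : Finset V) := hw
    obtain ⟨_, hsubv, hnev⟩ := hf v hvσ
    obtain ⟨_, hsubw, _⟩ := hf w hwσ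
    have hsub : (σ0 : Finset V) ⊆ ((f v) : Finset V) := by
      intro u hu
      by_cases huv : u = v
      · subst huv
        have : u ∈ (σ0 : Finset V).erase w := Finset.mem_erase.mpr ⟨hne', hu⟩
        rw [hvw]
        exact hsubw this
      · exact hsubv (Finset.mem_erase.mpr ⟨huv, hu⟩)
    have hfvc : ((f v) : Finset V).card = 4 := (mem_facesDim_iff.mp (f v).2).2
    have : (σ0 : Finset V) = ((f v) : Finset V) :=
      Finset.eq_of_subset_of_card_le hsub (by rw [hfvc, hσ0c])
    exact hnev (Subtype.ext this.symm)
  have hmaps : ∀ v ∈ (σ0 : Finset V), f v ∈ S.erase σ0 := by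
    intro v hv
    obtain ⟨h1, _, h3⟩ := hf v hv
    exact Finset.mem_erase.mpr ⟨h3, h1⟩
  have hcard4 : (σ0 : Finset V).card ≤ (S.erase σ0).card :=
    Finset.card_le_card_of_injOn f hmaps hinj
  have : (S.erase σ0).card = S.card - 1 := Finset.card_erase_of_mem hσ0S
  have hS1 : 1 ≤ S.card := Finset.card_pos.mpr ⟨σ0, hσ0S⟩
  have : suppCard c = S.card := rfl
  omega

end SComplex

open SComplex
/-- Proposition 14. -/
theorem prop14 {V : Type} [DecidableEq V] [Fintype V]
    (K : SComplex V) (hdim : K.IsDim 3) (hconn : K.betti 0 = 1)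
    (hβ : 1 ≤ K.betti 3) (hcb : K.HasCompleteBasis 3 2) :
    (3 : ℤ) * (K.fnum 3 : ℤ) ≤
      5 * ((K.fnum 2 : ℤ) - (K.fnum 1 : ℤ) - (K.betti 2 : ℤ) + (K.betti 1 : ℤ)
        + (K.fnum 0 : ℤ) - 2) := by
  classical
  have hfin : ∀ i, Module.finrank (ZMod 2) (Chains K i) = K.fnum i := fun i => by
    rw [Module.finrank_fintype_fun_eq_card, Fintype.card_coe]
    rfl
  -- `∂_0 = 0`, so `ker ∂_0` is everything
  have hk0 : Module.finrank (ZMod 2) (LinearMap.ker (K.boundary 0)) = K.fnum 0 := by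
    rw [boundary, if_pos rfl, LinearMap.ker_zero, finrank_top, hfin]
  -- there are no 4-faces
  have hf4 : K.fnum 4 = 0 := by
    have h4 : K.facesDim 4 = ∅ := by
      rw [facesDim, Finset.filter_eq_empty_iff]
      intro σ hσ h
      have := hdim.1 σ hσ
      omega
    rw [fnum, h4, Finset.card_empty]
  have hr4 : Module.finrank (ZMod 2) (LinearMap.range (K.boundary 4)) = 0 := by
    have h1 := LinearMap.finrank_range_le (K.boundary 4)
    rw [hfin 4, hf4] at h1
    omega
  -- rank-nullity
  have hrn1 : Module.finrank (ZMod 2) (LinearMap.range (K.boundary 1)) +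
      Module.finrank (ZMod 2) (LinearMap.ker (K.boundary 1)) = K.fnum 1 := by
    rw [LinearMap.finrank_range_add_finrank_ker, hfin]
  have hrn2 : Module.finrank (ZMod 2) (LinearMap.range (K.boundary 2)) +
      Module.finrank (ZMod 2) (LinearMap.ker (K.boundary 2)) = K.fnum 2 := by
    rw [LinearMap.finrank_range_add_finrank_ker, hfin]
  have hrn3 : Module.finrank (ZMod 2) (LinearMap.range (K.boundary 3)) +
      Module.finrank (ZMod 2) (LinearMap.ker (K.boundary 3)) = K.fnum 3 := by
    rw [LinearMap.finrank_range_add_finrank_ker, hfin]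
  -- `∂∂ = 0` inclusions
  have hle21 : Module.finrank (ZMod 2) (LinearMap.range (K.boundary 2)) ≤
      Module.finrank (ZMod 2) (LinearMap.ker (K.boundary 1)) := by
    apply Submodule.finrank_mono
    rintro x ⟨c, rfl⟩
    exact LinearMap.mem_ker.mpr (K.boundary_boundary 0 c)
  have hle32 : Module.finrank (ZMod 2) (LinearMap.range (K.boundary 3)) ≤
      Module.finrank (ZMod 2) (LinearMap.ker (K.boundary 2)) := by
    apply Submodule.finrank_mono
    rintro x ⟨c, rfl⟩
    exact LinearMap.mem_ker.mpr (K.boundary_boundary 1 c)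
  -- unfold the Betti numbers
  have hb0 : K.betti 0 = Module.finrank (ZMod 2) (LinearMap.ker (K.boundary 0)) -
      Module.finrank (ZMod 2) (LinearMap.range (K.boundary 1)) := rfl
  have hb1 : K.betti 1 = Module.finrank (ZMod 2) (LinearMap.ker (K.boundary 1)) -
      Module.finrank (ZMod 2) (LinearMap.range (K.boundary 2)) := rfl
  have hb2 : K.betti 2 = Module.finrank (ZMod 2) (LinearMap.ker (K.boundary 2)) -
      Module.finrank (ZMod 2) (LinearMap.range (K.boundary 3)) := rfl
  have hb3 : K.betti 3 = Module.finrank (ZMod 2) (LinearMap.ker (K.boundary 3)) -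
      Module.finrank (ZMod 2) (LinearMap.range (K.boundary 4)) := rfl
  -- the main combinatorial inequality: 5·β₃ + 5 ≤ 2·f₃
  have hmain : 5 * Module.finrank (ZMod 2) (LinearMap.ker (K.boundary 3)) + 5 ≤
      2 * K.fnum 3 := by
    obtain ⟨ι, hι, b, hcomp⟩ := hcb
    have hcardι : Module.finrank (ZMod 2) (LinearMap.ker (K.boundary 3)) = Fintype.card ι :=
      Module.finrank_eq_card_basis b
    have hι1 : 1 ≤ Fintype.card ι := by
      rw [← hcardι]
      omega
    have hne : Nonempty ι := Fintype.card_pos_iff.mp (by omega)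
    -- the sum of all basis elements is a nonzero cycle
    set z : LinearMap.ker (K.boundary 3) := ∑ i : ι, b i with hzdef
    have hzne : z ≠ 0 := by
      intro h
      have hli := b.linearIndependent
      rw [Fintype.linearIndependent_iff] at hli
      have h1 : ∑ i : ι, (1 : ZMod 2) • b i = 0 := by simpa using h
      have := hli (fun _ => 1) h1 (Classical.arbitrary ι)
      simp at this
    have hzcoe : (z : Chains K 3) ≠ 0 := by
      intro h
      exact hzne (by exact_mod_cast (ZeroMemClass.coe_eq_zero.mp h))
    -- support of each basis element, and of z, has size ≥ 5
    have h5b : ∀ i : ι, 5 ≤ suppCard ((b i : Chains K 3)) := by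
      intro i
      apply K.five_le_suppCard _ (LinearMap.mem_ker.mp (b i).2)
      intro h
      exact b.ne_zero i (ZeroMemClass.coe_eq_zero.mp h)
    have h5z : 5 ≤ suppCard ((z : Chains K 3)) :=
      K.five_le_suppCard _ (LinearMap.mem_ker.mp z.2) hzcoe
    -- the covering number of a face
    set cov : {σ // σ ∈ K.facesDim 3} → ℕ :=
      fun σ => (Finset.univ.filter (fun i : ι => (b i : Chains K 3) σ ≠ 0)).card with hcov
    -- double counting
    have hdc : ∑ i : ι, suppCard ((b i : Chains K 3)) =
        ∑ σ : {σ // σ ∈ K.facesDim 3}, cov σ := by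
      simp only [suppCard, hcov, Finset.card_filter]
      exact Finset.sum_comm
    have hlow : 5 * Fintype.card ι ≤ ∑ σ : {σ // σ ∈ K.facesDim 3}, cov σ := by
      rw [← hdc]
      calc 5 * Fintype.card ι = ∑ _i : ι, 5 := by
            rw [Finset.sum_const, smul_eq_mul, Finset.card_univ, mul_comm]
        _ ≤ ∑ i : ι, suppCard ((b i : Chains K 3)) :=
            Finset.sum_le_sum fun i _ => h5b i
    -- the value of z on a face is the parity of the covering number
    have hval : ∀ σ : {σ // σ ∈ K.facesDim 3},
        (z : Chains K 3) σ = (cov σ : ZMod 2) := by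
      intro σ
      have h1 : (z : Chains K 3) σ = ∑ i : ι, (b i : Chains K 3) σ := by
        rw [hzdef, AddSubmonoidClass.coe_finset_sum, Finset.sum_apply]
      rw [h1, ← Finset.sum_filter_ne_zero, Finset.sum_congr rfl
        (fun i hi => zmod2_ne_zero (Finset.mem_filter.mp hi).2),
        Finset.sum_const, nsmul_eq_mul, mul_one, hcov]
    -- pointwise bound
    have hcount : ∀ σ : {σ // σ ∈ K.facesDim 3},
        cov σ + (if (z : Chains K 3) σ ≠ 0 then 1 else 0) ≤ 2 := by
      intro σ
      have h2 : cov σ ≤ 2 := hcomp σ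
      by_cases hzσ : (z : Chains K 3) σ ≠ 0
      · have hcovne : ((cov σ : ℕ) : ZMod 2) ≠ 0 := by
          rw [← hval σ]; exact hzσ
        have hnd : ¬ (2 ∣ cov σ) := fun h =>
          hcovne ((ZMod.natCast_eq_zero_iff _ _).mpr h)
        rw [if_pos hzσ]
        omega
      · rw [if_neg hzσ]
        omega
    have hup : (∑ σ : {σ // σ ∈ K.facesDim 3}, cov σ) + suppCard ((z : Chains K 3)) ≤
        2 * K.fnum 3 := by
      have h1 : suppCard ((z : Chains K 3)) = ∑ σ : {σ // σ ∈ K.facesDim 3},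
          (if (z : Chains K 3) σ ≠ 0 then 1 else 0) := by
        rw [suppCard, Finset.card_filter]
      rw [h1, ← Finset.sum_add_distrib]
      calc (∑ σ : {σ // σ ∈ K.facesDim 3},
            (cov σ + if (z : Chains K 3) σ ≠ 0 then 1 else 0))
          ≤ ∑ _σ : {σ // σ ∈ K.facesDim 3}, 2 := Finset.sum_le_sum fun σ _ => hcount σ
        _ = 2 * K.fnum 3 := by
            rw [Finset.sum_const, smul_eq_mul, Finset.card_univ, Fintype.card_coe, mul_comm]
            rfl
    rw [hcardι]
    omega
  -- put everything together
  omega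
end

section
/- (Strengthened Sperner lemma, as used in Section 6) Let Σ be a finite simplicial complex all of whose vertices lie in a set of size n. Then for all integers i > j ≥ 0, f_i(Σ)·C(n, j+1) ≤ f_j(Σ)·C(n, i+1), where C(n, k) denotes the binomial coefficient n choose k. -/
open Finset

open SComplex
/-- strengthened Sperner lemma. -/
theorem sperner {V : Type} [DecidableEq V] [Fintype V] (n : ℕ)
    (hn : Fintype.card V = n) (K : SComplex V) (i j : ℕ) (hij : j < i) :
    K.fnum i * Nat.choose n (j + 1) ≤ K.fnum j * Nat.choose n (i + 1) := by
  classical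
  -- dispose of the case `n < i + 1`: then there are no `i`-faces
  by_cases hin : i + 1 ≤ n
  swap
  · have hfi : K.fnum i = 0 := by
      rw [fnum, Finset.card_eq_zero]
      by_contra h
      obtain ⟨σ, hσ⟩ := Finset.nonempty_iff_ne_empty.mpr h
      have := Finset.mem_filter.mp hσ
      have hc : σ.card ≤ n := hn ▸ Finset.card_le_univ σ
      omega
    simp [hfi]
  set A := K.facesDim i with hA
  set B := K.facesDim j with hB
  -- each i-face contains exactly C(i+1, j+1) j-faces
  have key1 : ∀ σ ∈ A, (B.filter (fun τ => τ ⊆ σ)).card = (i + 1).choose (j + 1) := by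
    intro σ hσ
    have hσf := Finset.mem_filter.mp hσ
    have : B.filter (fun τ => τ ⊆ σ) = σ.powersetCard (j + 1) := by
      ext τ
      simp only [hB, facesDim, Finset.mem_filter, Finset.mem_powersetCard]
      constructor
      · rintro ⟨⟨_, hc⟩, hsub⟩; exact ⟨hsub, hc⟩
      · rintro ⟨hsub, hc⟩
        refine ⟨⟨K.down_closed σ hσf.1 τ hsub ?_, hc⟩, hsub⟩
        intro he; rw [he] at hc; simp at hc
    rw [this, Finset.card_powersetCard, hσf.2]
  -- each j-face is contained in at most C(n - (j+1), i - j) i-faces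
  have key2 : ∀ τ ∈ B, (A.filter (fun σ => τ ⊆ σ)).card ≤ (n - (j + 1)).choose (i - j) := by
    intro τ hτ
    have hτf := Finset.mem_filter.mp hτ
    have hcard : ((Finset.univ \ τ).powersetCard (i - j)).card = (n - (j + 1)).choose (i - j) := by
      rw [Finset.card_powersetCard, Finset.card_sdiff_of_subset (Finset.subset_univ τ), Finset.card_univ, hn, hτf.2]
    rw [← hcard]
    apply Finset.card_le_card_of_injOn (fun σ => σ \ τ)
    · intro σ hσ
      have hσf := Finset.mem_filter.mp hσ
      have hσsub := hσf.2
      have hσA := Finset.mem_filter.mp hσf.1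
      rw [Finset.mem_coe, Finset.mem_powersetCard]
      constructor
      · exact Finset.sdiff_subset_sdiff (Finset.subset_univ σ) le_rfl
      · rw [Finset.card_sdiff_of_subset hσsub, hσA.2, hτf.2]
        omega
    · intro σ₁ h₁ σ₂ h₂ he
      have h₁s := (Finset.mem_filter.mp h₁).2
      have h₂s := (Finset.mem_filter.mp h₂).2
      simp only at he
      calc σ₁ = σ₁ \ τ ∪ τ := by rw [Finset.sdiff_union_of_subset h₁s]
        _ = σ₂ \ τ ∪ τ := by rw [he]
        _ = σ₂ := Finset.sdiff_union_of_subset h₂s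
  -- double counting
  have swap : ∑ σ ∈ A, (B.filter (fun τ => τ ⊆ σ)).card
      = ∑ τ ∈ B, (A.filter (fun σ => τ ⊆ σ)).card := by
    simp_rw [Finset.card_filter]
    exact Finset.sum_comm
  have count : K.fnum i * (i + 1).choose (j + 1) ≤ K.fnum j * (n - (j + 1)).choose (i - j) := by
    calc K.fnum i * (i + 1).choose (j + 1)
        = ∑ σ ∈ A, (B.filter (fun τ => τ ⊆ σ)).card := by
          rw [Finset.sum_congr rfl key1, Finset.sum_const, smul_eq_mul]; rfl
      _ = ∑ τ ∈ B, (A.filter (fun σ => τ ⊆ σ)).card := swap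
      _ ≤ ∑ _τ ∈ B, (n - (j + 1)).choose (i - j) := Finset.sum_le_sum key2
      _ = K.fnum j * (n - (j + 1)).choose (i - j) := by
          rw [Finset.sum_const, smul_eq_mul]; rfl
  -- arithmetic: use C(n, i+1) * C(i+1, j+1) = C(n, j+1) * C(n-(j+1), i-j)
  have hid : n.choose (i + 1) * (i + 1).choose (j + 1)
      = n.choose (j + 1) * (n - (j + 1)).choose (i - j) := by
    have := Nat.choose_mul (n := n) (k := i + 1) (s := j + 1) (by omega)
    have heq : (i + 1) - (j + 1) = i - j := by omega
    rw [heq] at this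
    exact this
  have hpos : 0 < (i + 1).choose (j + 1) := Nat.choose_pos (by omega)
  apply Nat.le_of_mul_le_mul_right _ hpos
  calc K.fnum i * n.choose (j + 1) * (i + 1).choose (j + 1)
      = K.fnum i * (i + 1).choose (j + 1) * n.choose (j + 1) := by ring
    _ ≤ K.fnum j * (n - (j + 1)).choose (i - j) * n.choose (j + 1) :=
        Nat.mul_le_mul_right _ count
    _ = K.fnum j * (n.choose (j + 1) * (n - (j + 1)).choose (i - j)) := by ring
    _ = K.fnum j * (n.choose (i + 1) * (i + 1).choose (j + 1)) := by rw [hid]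
    _ = K.fnum j * n.choose (i + 1) * (i + 1).choose (j + 1) := by ring
end
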